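/- arXiv:2502.09499 — 3 statements merged into one kernel-verified Lean document; each statement's English description precedes it below -/
import Mathlib

section
/- Let G be a compact group with Haar probability measure and χ the character of a finite-dimensional irreducible unitary representation of dimension d_χ. Then ∫_G ∫_G χ(y⁻¹ z⁻¹ y z) dy dz = 1 / d_χ. -/
open MeasureTheory

lemma aux_integrable {G : Type*} [TopologicalSpace G] [CompactSpace G]
    [MeasurableSpace G] [BorelSpace G] (μ : Measure G) [IsFiniteMeasure μ]
    {E : Type*} [NormedAddCommGroup E] {f : G → E} (hf : Continuous f) :
    Integrable f μ :=
  hf.integrable_of_hasCompactSupport (HasCompactSupport.of_compactSpace f)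

lemma schur_aux {G : Type*} [Group G] [TopologicalSpace G] [IsTopologicalGroup G] [CompactSpace G]
    [MeasurableSpace G] [BorelSpace G]
    (μ : Measure G) [μ.IsHaarMeasure] [IsProbabilityMeasure μ] [μ.IsMulRightInvariant]
    {V : Type*} [NormedAddCommGroup V] [NormedSpace ℂ V] [FiniteDimensional ℂ V]
    (F : G → (V →L[ℂ] V)) (hFc : Continuous F)
    (hmul : ∀ g h : G, F (g * h) = F g * F h) (hone : F 1 = 1)
    (hirr' : ∀ W : Submodule ℂ V, (∀ g : G, W.map (F g : V →ₗ[ℂ] V) = W) → W = ⊥ ∨ W = ⊤)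
    (B : V →L[ℂ] V) :
    ∫ y, F y⁻¹ * B * F y ∂μ =
      ((LinearMap.trace ℂ V (B : V →ₗ[ℂ] V)) / (Module.finrank ℂ V : ℂ)) • 1 := by
  rcases subsingleton_or_nontrivial V with hV | hV
  · exact Subsingleton.elim _ _
  have hinv : ∀ g : G, F g⁻¹ * F g = 1 := fun g => by rw [← hmul, inv_mul_cancel, hone]
  have hinv' : ∀ g : G, F g * F g⁻¹ = 1 := fun g => by rw [← hmul, mul_inv_cancel, hone]
  set n : ℕ := Module.finrank ℂ V with hn
  have hnpos : 0 < n := Module.finrank_pos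
  have hd : (n : ℂ) ≠ 0 := Nat.cast_ne_zero.2 hnpos.ne'
  set f : G → (V →L[ℂ] V) := fun y => F y⁻¹ * B * F y with hf
  have hfc : Continuous f := ((hFc.comp continuous_inv).mul continuous_const).mul hFc
  have hfi : Integrable f μ := aux_integrable μ hfc
  set T : V →L[ℂ] V := ∫ y, f y ∂μ with hT
  -- T commutes with every F g
  have hcomm : ∀ g : G, F g * T = T * F g := by
    intro g
    have h1 : ∫ y, f (y * g) ∂μ = T := integral_mul_right_eq_self f g
    have h2 : ∀ y : G, f (y * g) = F g⁻¹ * f y * F g := by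
      intro y
      simp only [hf, mul_inv_rev, hmul, mul_assoc]
    have h3 : ∫ y, F g⁻¹ * f y * F g ∂μ = F g⁻¹ * T * F g := by
      let L : (V →L[ℂ] V) →L[ℂ] (V →L[ℂ] V) :=
        ((ContinuousLinearMap.mul ℂ (V →L[ℂ] V)).flip (F g)).comp
          (ContinuousLinearMap.mul ℂ (V →L[ℂ] V) (F g⁻¹))
      have hL : ∀ A : V →L[ℂ] V, L A = F g⁻¹ * A * F g := fun A => rfl
      calc ∫ y, F g⁻¹ * f y * F g ∂μ = ∫ y, L (f y) ∂μ := by simp only [hL]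
      _ = L (∫ y, f y ∂μ) := L.integral_comp_comm hfi
      _ = F g⁻¹ * T * F g := by rw [hL, hT]
    have h4 : T = F g⁻¹ * T * F g := by
      rw [← h3, ← h1]
      exact integral_congr_ae (Filter.Eventually.of_forall fun y => (h2 y))
    calc F g * T = F g * (F g⁻¹ * T * F g) := by rw [← h4]
    _ = (F g * F g⁻¹) * T * F g := by simp only [mul_assoc]
    _ = T * F g := by rw [hinv' g, one_mul]
  -- Schur: T is a scalar
  obtain ⟨c, hc⟩ := Module.End.exists_eigenvalue (T : V →ₗ[ℂ] V)
  set W : Submodule ℂ V := Module.End.eigenspace (T : V →ₗ[ℂ] V) c with hW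
  have hWne : W ≠ ⊥ := hc
  have hTg : ∀ (g : G) (x : V), T (F g x) = F g (T x) := by
    intro g x
    have := congrArg (fun (A : V →L[ℂ] V) => A x) (hcomm g)
    simpa using this.symm
  have hmem : ∀ (g : G) (x : V), x ∈ W → F g x ∈ W := by
    intro g x hx
    rw [hW, Module.End.mem_eigenspace_iff] at hx ⊢
    simp only [ContinuousLinearMap.coe_coe] at hx ⊢
    rw [hTg g x, hx, _root_.map_smul]
  have hWinv : ∀ g : G, W.map (F g : V →ₗ[ℂ] V) = W := by
    intro g
    apply le_antisymm
    · rintro _ ⟨x, hx, rfl⟩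
      exact hmem g x hx
    · intro x hx
      refine ⟨F g⁻¹ x, hmem g⁻¹ x hx, ?_⟩
      have : (F g * F g⁻¹) x = x := by rw [hinv' g]; rfl
      simpa using this
  have hWtop : W = ⊤ := (hirr' W hWinv).resolve_left hWne
  have hTsc : T = c • 1 := by
    ext x
    have hx : x ∈ W := hWtop ▸ Submodule.mem_top
    rw [hW, Module.End.mem_eigenspace_iff] at hx
    simpa using hx
  -- compute c via trace
  have htr : LinearMap.trace ℂ V (T : V →ₗ[ℂ] V) = LinearMap.trace ℂ V (B : V →ₗ[ℂ] V) := by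
    have expand : ∀ y : G, LinearMap.trace ℂ V ((f y : V →L[ℂ] V) : V →ₗ[ℂ] V)
        = LinearMap.trace ℂ V (B : V →ₗ[ℂ] V) := by
      intro y
      have : ((f y : V →L[ℂ] V) : V →ₗ[ℂ] V)
          = ((F y⁻¹ : V →ₗ[ℂ] V) * (B : V →ₗ[ℂ] V)) * (F y : V →ₗ[ℂ] V) := rfl
      rw [this, LinearMap.trace_mul_comm]
      have h5 : ((F y : V →ₗ[ℂ] V) * ((F y⁻¹ : V →ₗ[ℂ] V) * (B : V →ₗ[ℂ] V)))
          = ((F y * F y⁻¹ : V →L[ℂ] V) : V →ₗ[ℂ] V) * (B : V →ₗ[ℂ] V) :=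
        (mul_assoc _ _ _).symm
      rw [h5, hinv' y, ContinuousLinearMap.one_def, ContinuousLinearMap.coe_id]
      exact congrArg (LinearMap.trace ℂ V) (one_mul _)
    let Tr : (V →L[ℂ] V) →L[ℂ] ℂ :=
      LinearMap.toContinuousLinearMap
        ((LinearMap.trace ℂ V).comp (ContinuousLinearMap.coeLM ℂ))
    have hTr : ∀ A : V →L[ℂ] V, Tr A = LinearMap.trace ℂ V (A : V →ₗ[ℂ] V) := fun A => rfl
    have := Tr.integral_comp_comm hfi
    rw [← hTr, hT, ← this]
    simp only [hTr, expand]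
    simp
  rw [hTsc] at htr
  have hce : c * n = LinearMap.trace ℂ V (B : V →ₗ[ℂ] V) := by
    have : ((c • (1 : V →L[ℂ] V) : V →L[ℂ] V) : V →ₗ[ℂ] V) = c • (LinearMap.id : V →ₗ[ℂ] V) := by
      rfl
    rw [this] at htr
    simpa [LinearMap.trace_id, mul_comm] using htr
  rw [hTsc]
  congr 1
  field_simp [← hce]
  exact hce

theorem compact_group_character_commutator_integral
    {G : Type*} [Group G] [TopologicalSpace G] [IsTopologicalGroup G] [CompactSpace G]
    [MeasurableSpace G] [BorelSpace G]
    (μ : Measure G) [μ.IsHaarMeasure] [IsProbabilityMeasure μ]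
    {V : Type*} [NormedAddCommGroup V] [InnerProductSpace ℂ V] [FiniteDimensional ℂ V]
    (ρ : G →* (V ≃ₗᵢ[ℂ] V))
    (hcont : Continuous fun p : G × V => ρ p.1 p.2)
    (hirr : ∀ W : Submodule ℂ V,
      (∀ g : G, W.map ((ρ g).toLinearEquiv : V →ₗ[ℂ] V) = W) → W = ⊥ ∨ W = ⊤)
    (χ : G → ℂ) (hχ : ∀ g, χ g = LinearMap.trace ℂ V ((ρ g).toLinearEquiv : V →ₗ[ℂ] V)) :
    ∫ z, ∫ y, χ (y⁻¹ * z⁻¹ * y * z) ∂μ ∂μ = 1 / (Module.finrank ℂ V : ℂ) := by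
  haveI : μ.IsMulRightInvariant := by
    constructor
    intro g
    have : IsProbabilityMeasure (μ.map (· * g)) :=
      Measure.isProbabilityMeasure_map (measurable_mul_const g).aemeasurable
    exact Measure.isHaarMeasure_eq_of_isProbabilityMeasure _ μ
  set n : ℕ := Module.finrank ℂ V with hn
  -- the representation as continuous linear maps
  set F : G → (V →L[ℂ] V) :=
    fun g => LinearMap.toContinuousLinearMap ((ρ g).toLinearEquiv : V →ₗ[ℂ] V) with hF
  have hFapp : ∀ (g : G) (v : V), F g v = ρ g v := fun g v => rfl
  have hFcoe : ∀ g : G, (F g : V →ₗ[ℂ] V) = ((ρ g).toLinearEquiv : V →ₗ[ℂ] V) :=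
    fun g => rfl
  have hmul : ∀ g h : G, F (g * h) = F g * F h := by
    intro g h
    ext v
    simp [hFapp, map_mul]
  have hone : F 1 = 1 := by
    ext v
    simp [hFapp]
  have hFc : Continuous F := by
    rw [continuous_clm_apply]
    intro v
    exact hcont.comp (continuous_id.prodMk continuous_const)
  have hirr' : ∀ W : Submodule ℂ V, (∀ g : G, W.map (F g : V →ₗ[ℂ] V) = W) → W = ⊥ ∨ W = ⊤ := by
    intro W h
    exact hirr W (fun g => by rw [← hFcoe g]; exact h g)
  have hχF : ∀ g : G, χ g = LinearMap.trace ℂ V (F g : V →ₗ[ℂ] V) := by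
    intro g; rw [hχ, hFcoe]
  let Tr : (V →L[ℂ] V) →L[ℂ] ℂ :=
    LinearMap.toContinuousLinearMap
      ((LinearMap.trace ℂ V).comp (ContinuousLinearMap.coeLM ℂ))
  have hTr : ∀ A : V →L[ℂ] V, Tr A = LinearMap.trace ℂ V (A : V →ₗ[ℂ] V) := fun A => rfl
  have hχTr : ∀ g : G, χ g = Tr (F g) := fun g => by rw [hTr, hχF]
  -- inner integral
  have hy : ∀ z : G, ∫ y, χ (y⁻¹ * z⁻¹ * y * z) ∂μ = χ z⁻¹ * χ z / n := by
    intro z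
    set f : G → (V →L[ℂ] V) := fun y => F y⁻¹ * F z⁻¹ * F y with hfdef
    have hfc : Continuous f := ((hFc.comp continuous_inv).mul continuous_const).mul hFc
    have hfi : Integrable f μ := aux_integrable μ hfc
    let L : (V →L[ℂ] V) →L[ℂ] ℂ :=
      Tr.comp ((ContinuousLinearMap.mul ℂ (V →L[ℂ] V)).flip (F z))
    have hL : ∀ A : V →L[ℂ] V, L A = Tr (A * F z) := fun A => rfl
    have hint : ∀ y : G, χ (y⁻¹ * z⁻¹ * y * z) = L (f y) := by
      intro y
      rw [hχTr, hL, hfdef]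
      congr 1
      rw [show y⁻¹ * z⁻¹ * y * z = ((y⁻¹ * z⁻¹) * y) * z from rfl, hmul, hmul, hmul]
    have hs : ∫ y, f y ∂μ = (χ z⁻¹ / n) • 1 := by
      have := schur_aux μ F hFc hmul hone hirr' (F z⁻¹)
      rw [hfdef, this, ← hχF]
    calc ∫ y, χ (y⁻¹ * z⁻¹ * y * z) ∂μ = ∫ y, L (f y) ∂μ := by simp only [hint]
    _ = L (∫ y, f y ∂μ) := L.integral_comp_comm hfi
    _ = Tr (((χ z⁻¹ / n) • 1) * F z) := by rw [hs, hL]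
    _ = (χ z⁻¹ / n) * Tr (F z) := by rw [smul_mul_assoc, one_mul, _root_.map_smul, smul_eq_mul]
    _ = χ z⁻¹ * χ z / n := by rw [← hχTr]; ring
  -- rewrite the outer integral
  have hred : ∫ z, ∫ y, χ (y⁻¹ * z⁻¹ * y * z) ∂μ ∂μ = (∫ z, χ z⁻¹ * χ z ∂μ) / n := by
    rw [← integral_div]
    exact integral_congr_ae (Filter.Eventually.of_forall fun z => hy z)
  rw [hred]
  -- handle the degenerate case
  rcases subsingleton_or_nontrivial V with hV | hV
  · have hn0 : n = 0 := by
      rw [hn, Module.finrank_zero_of_subsingleton]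
    rw [hn0]
    simp
  have hnpos : 0 < n := Module.finrank_pos
  have hd : (n : ℂ) ≠ 0 := Nat.cast_ne_zero.2 hnpos.ne'
  -- orthogonality of the character: ∫ χ(z⁻¹) χ(z) = 1
  let b : Module.Basis (Fin n) ℂ V := Module.finBasis ℂ V
  let r : G → Fin n → Fin n → ℂ := fun g i j => b.repr (ρ g (b j)) i
  have hrc : ∀ i j : Fin n, Continuous fun g => r g i j := by
    intro i j
    have h1 : Continuous fun g : G => ρ g (b j) :=
      hcont.comp (continuous_id.prodMk continuous_const)
    have h2 : Continuous fun v : V => b.repr v i :=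
      (LinearMap.continuous_of_finiteDimensional
        ((Finsupp.lapply i).comp (b.repr : V →ₗ[ℂ] (Fin n →₀ ℂ))))
    exact h2.comp h1
  have hχsum : ∀ g : G, χ g = ∑ i, r g i i := by
    intro g
    rw [hχ g, LinearMap.trace_eq_matrix_trace ℂ b]
    simp only [Matrix.trace, Matrix.diag, LinearMap.toMatrix_apply]
    rfl
  have key : ∀ i j : Fin n, ∫ z, r z⁻¹ i i * r z j j ∂μ
      = (if i = j then (1 : ℂ) / n else 0) := by
    intro i j
    set E : V →L[ℂ] V := LinearMap.toContinuousLinearMap ((b.coord j).smulRight (b i)) with hE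
    have hEapp : ∀ v : V, E v = b.repr v j • b i := fun v => rfl
    have htrE : LinearMap.trace ℂ V (E : V →ₗ[ℂ] V) = if i = j then 1 else 0 := by
      rw [LinearMap.trace_eq_matrix_trace ℂ b]
      simp only [Matrix.trace, Matrix.diag, LinearMap.toMatrix_apply]
      simp only [ContinuousLinearMap.coe_coe, hEapp, _root_.map_smul, Module.Basis.repr_self,
        Finsupp.smul_apply, Finsupp.single_apply, smul_eq_mul]
      simp only [mul_ite, ite_mul, one_mul, mul_one, zero_mul, mul_zero]
      rw [Finset.sum_ite_eq]
      simp [eq_comm]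
    have hSch := schur_aux μ F hFc hmul hone hirr' E
    let ψ : (V →L[ℂ] V) →L[ℂ] ℂ :=
      LinearMap.toContinuousLinearMap
        ((Finsupp.lapply i).comp ((b.repr : V →ₗ[ℂ] (Fin n →₀ ℂ)).comp
          ((LinearMap.applyₗ (b j)).comp (ContinuousLinearMap.coeLM ℂ))))
    have hψ : ∀ A : V →L[ℂ] V, ψ A = b.repr (A (b j)) i := fun A => rfl
    set f : G → (V →L[ℂ] V) := fun z => F z⁻¹ * E * F z with hfdef
    have hfc : Continuous f := ((hFc.comp continuous_inv).mul continuous_const).mul hFc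
    have hfi : Integrable f μ := aux_integrable μ hfc
    have hpt : ∀ z : G, ψ (f z) = r z⁻¹ i i * r z j j := by
      intro z
      rw [hψ]
      have : f z (b j) = F z⁻¹ (E (F z (b j))) := rfl
      rw [this, hEapp, hFapp, hFapp, _root_.map_smul, _root_.map_smul]
      simp only [Finsupp.smul_apply, smul_eq_mul]
      rw [mul_comm]
    calc ∫ z, r z⁻¹ i i * r z j j ∂μ = ∫ z, ψ (f z) ∂μ := by simp only [hpt]
    _ = ψ (∫ z, f z ∂μ) := ψ.integral_comp_comm hfi
    _ = (if i = j then (1 : ℂ) / n else 0) := by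
      rw [hSch, _root_.map_smul, hψ, htrE]
      have h1 : ((1 : V →L[ℂ] V) (b j)) = b j := rfl
      rw [h1, Module.Basis.repr_self]
      simp [Finsupp.single_apply, smul_eq_mul, eq_comm]
      split_ifs with hij
      · subst hij; simp [hn]
      · simp [Ne.symm hij]
  have horth : ∫ z, χ z⁻¹ * χ z ∂μ = 1 := by
    have hexp : ∀ z : G, χ z⁻¹ * χ z = ∑ p : Fin n × Fin n, r z⁻¹ p.1 p.1 * r z p.2 p.2 := by
      intro z
      rw [hχsum z⁻¹, hχsum z, Finset.sum_mul_sum]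
      exact (Fintype.sum_prod_type' _).symm
    rw [show (fun z => χ z⁻¹ * χ z) = fun z => ∑ p : Fin n × Fin n, r z⁻¹ p.1 p.1 * r z p.2 p.2 from funext hexp]
    rw [integral_finset_sum _ (fun p _ => aux_integrable μ
      (((hrc p.1 p.1).comp continuous_inv).mul (hrc p.2 p.2)))]
    simp only [key]
    rw [Fintype.sum_prod_type]
    simp [Finset.sum_ite_eq]
    field_simp
  rw [horth, hn]
end

section
/- Let G be a compact group with Haar probability measure, χ an irreducible character of dimension d_χ, and k ≥ 1. Then ∫_{G^{2k}} χ([y₁,z₁]⋯[y_k,z_k]) dy₁ dz₁ ⋯ dy_k dz_k = 1 / d_χ^{2k-1}. -/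
open MeasureTheory
open scoped NNReal ENNReal
set_option linter.unusedSectionVars false

section Aux
variable {G : Type*} [Group G] [TopologicalSpace G] [IsTopologicalGroup G] [CompactSpace G]
  [MeasurableSpace G] [BorelSpace G]
  {V : Type*} [NormedAddCommGroup V] [InnerProductSpace ℂ V] [FiniteDimensional ℂ V]

noncomputable def pihM (ρ : G →* (V ≃ₗᵢ[ℂ] V)) : G →* (V →L[ℂ] V) where
  toFun g := ((ρ g).toContinuousLinearEquiv : V →L[ℂ] V)
  map_one' := by ext v; simp
  map_mul' g h := by ext v; simp

lemma pihM_apply (ρ : G →* (V ≃ₗᵢ[ℂ] V)) (g : G) (v : V) : pihM ρ g v = ρ g v := rfl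

noncomputable def trC (V : Type*) [NormedAddCommGroup V] [InnerProductSpace ℂ V]
    [FiniteDimensional ℂ V] : (V →L[ℂ] V) →L[ℂ] ℂ :=
  LinearMap.toContinuousLinearMap ((LinearMap.trace ℂ V).comp (ContinuousLinearMap.coeLM ℂ))

lemma trC_apply (f : V →L[ℂ] V) : trC V f = LinearMap.trace ℂ V (f : V →ₗ[ℂ] V) := rfl

lemma pihM_cont (ρ : G →* (V ≃ₗᵢ[ℂ] V)) (hcont : Continuous fun p : G × V => ρ p.1 p.2) :
    Continuous (pihM ρ) := by
  classical
  set b : Module.Basis (Fin (Module.finrank ℂ V)) ℂ V := Module.finBasis ℂ V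
  set L : (Fin (Module.finrank ℂ V) → V) →ₗ[ℂ] (V →L[ℂ] V) :=
    (LinearMap.toContinuousLinearMap.toLinearMap).comp (b.constr ℂ).toLinearMap with hL
  have hLc : Continuous L := L.continuous_of_finiteDimensional
  have key : ∀ g, L (fun i => ρ g (b i)) = pihM ρ g := by
    intro g
    apply ContinuousLinearMap.coe_injective
    simp only [hL, LinearMap.coe_comp, Function.comp_apply, LinearEquiv.coe_coe,
      LinearMap.coe_toContinuousLinearMap]
    apply b.ext
    intro i
    simp [pihM_apply]
  have : Continuous fun g => L (fun i => ρ g (b i)) := by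
    apply hLc.comp
    apply continuous_pi
    intro i
    exact hcont.comp (continuous_id.prodMk continuous_const)
  simpa only [key] using this

/-- Schur's lemma: an operator commuting with an irreducible rep is scalar. -/
lemma scalar_of_comm (ρ : G →* (V ≃ₗᵢ[ℂ] V))
    (hirr : ∀ W : Submodule ℂ V,
      (∀ g : G, W.map ((ρ g).toLinearEquiv : V →ₗ[ℂ] V) = W) → W = ⊥ ∨ W = ⊤)
    (T : V →L[ℂ] V) (hcomm : ∀ g, pihM ρ g * T = T * pihM ρ g) :
    T = (trC V T / (Module.finrank ℂ V : ℂ)) • 1 := by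
  classical
  by_cases hn : Module.finrank ℂ V = 0
  · have : Subsingleton V := by
      rw [Module.finrank_zero_iff] at hn; exact hn
    ext v
    exact Subsingleton.elim _ _
  · have hnt : Nontrivial V := by
      rw [← Module.finrank_pos_iff (R := ℂ)]; omega
    set f : Module.End ℂ V := (T : V →ₗ[ℂ] V) with hf
    obtain ⟨c, hc⟩ := Module.End.exists_eigenvalue f
    set W := Module.End.eigenspace f c with hW
    have hTρ : ∀ (g : G) (v : V), T (ρ g v) = ρ g (T v) := by
      intro g v
      have := congrArg (fun (S : V →L[ℂ] V) => S v) (hcomm g)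
      simpa [ContinuousLinearMap.mul_apply, pihM_apply] using this.symm
    have hmem : ∀ v, v ∈ W ↔ T v = c • v := by
      intro v; rw [hW, Module.End.mem_eigenspace_iff]; rfl
    have hWinv : ∀ g : G, W.map ((ρ g).toLinearEquiv : V →ₗ[ℂ] V) = W := by
      intro g
      apply le_antisymm
      · rintro _ ⟨w, hw, rfl⟩
        have hw' : T w = c • w := (hmem w).1 hw
        refine (hmem _).2 ?_
        show T (ρ g w) = c • (ρ g w)
        rw [hTρ, hw', _root_.map_smul]
      · intro w hw
        have hw' : T w = c • w := (hmem w).1 hw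
        refine ⟨ρ g⁻¹ w, (hmem _).2 ?_, ?_⟩
        · rw [hTρ, hw', _root_.map_smul]
        · show ρ g (ρ g⁻¹ w) = w
          have : ρ g * ρ g⁻¹ = 1 := by rw [← map_mul, mul_inv_cancel, map_one]
          calc ρ g (ρ g⁻¹ w) = (ρ g * ρ g⁻¹) w := rfl
          _ = w := by rw [this]; rfl
    rcases hirr W hWinv with h | h
    · exact ((hc : _ ≠ ⊥) h).elim
    · have hT : ∀ v, T v = c • v := by
        intro v
        have : v ∈ W := h ▸ Submodule.mem_top
        rwa [hmem] at this
      have hTeq : T = c • 1 := by ext v; simpa using hT v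
      have htrone : trC V (1 : V →L[ℂ] V) = (Module.finrank ℂ V : ℂ) := by
        rw [trC_apply]
        have : ((1 : V →L[ℂ] V) : V →ₗ[ℂ] V) = LinearMap.id := rfl
        rw [this]
        exact LinearMap.trace_id ℂ V
      have htr : trC V T = c * (Module.finrank ℂ V : ℂ) := by
        rw [hTeq, (trC V).map_smul, htrone, smul_eq_mul]
      rw [htr, hTeq, mul_div_assoc,
        div_self (Nat.cast_ne_zero.mpr hn : (Module.finrank ℂ V : ℂ) ≠ 0), mul_one]
end Aux

section Integralx
variable {G : Type*} [Group G] [TopologicalSpace G] [IsTopologicalGroup G] [CompactSpace G]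
  [MeasurableSpace G] [BorelSpace G]
  {V : Type*} [NormedAddCommGroup V] [InnerProductSpace ℂ V] [FiniteDimensional ℂ V]
  (μ : Measure G) [μ.IsHaarMeasure] [IsProbabilityMeasure μ]
  (ρ : G →* (V ≃ₗᵢ[ℂ] V))

theorem compact_right_inv : μ.IsMulRightInvariant := by
  constructor
  intro g
  set μ' := Measure.map (· * g) μ with hμ'
  have hmp : IsProbabilityMeasure μ' :=
    Measure.isProbabilityMeasure_map (measurable_mul_const g).aemeasurable
  have h := Measure.isMulLeftInvariant_eq_smul_of_innerRegular μ' μ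
  have hc : Measure.haarScalarFactor μ' μ = 1 := by
    have h2 := congrArg (fun m : Measure G => m Set.univ) h
    simp only [measure_univ, Measure.smul_apply, ENNReal.smul_def, smul_eq_mul, mul_one] at h2
    exact_mod_cast h2.symm
  rw [h, hc, one_smul]

lemma trace_conj (x : G) (A : V →L[ℂ] V) :
    trC V (pihM ρ x * A * pihM ρ x⁻¹) = trC V A := by
  rw [trC_apply, trC_apply]
  have h1 : ((pihM ρ x * A * pihM ρ x⁻¹ : V →L[ℂ] V) : V →ₗ[ℂ] V)
      = ((pihM ρ x * A : V →L[ℂ] V) : V →ₗ[ℂ] V) * ((pihM ρ x⁻¹ : V →L[ℂ] V) : V →ₗ[ℂ] V) := rfl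
  rw [h1, LinearMap.trace_mul_comm]
  have h2 : ((pihM ρ x⁻¹ : V →L[ℂ] V) : V →ₗ[ℂ] V) * ((pihM ρ x * A : V →L[ℂ] V) : V →ₗ[ℂ] V)
      = ((pihM ρ x⁻¹ * (pihM ρ x * A) : V →L[ℂ] V) : V →ₗ[ℂ] V) := rfl
  rw [h2]
  congr 2
  rw [← mul_assoc, ← map_mul, inv_mul_cancel, map_one, one_mul]

lemma lemA (hcont : Continuous fun p : G × V => ρ p.1 p.2)
    (hirr : ∀ W : Submodule ℂ V,
      (∀ g : G, W.map ((ρ g).toLinearEquiv : V →ₗ[ℂ] V) = W) → W = ⊥ ∨ W = ⊤)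
    (A : V →L[ℂ] V) :
    ∫ x, pihM ρ x * A * pihM ρ x⁻¹ ∂μ
      = (trC V A / (Module.finrank ℂ V : ℂ)) • 1 := by
  have hπc := pihM_cont ρ hcont
  have hcf : Continuous fun x : G => pihM ρ x * A * pihM ρ x⁻¹ :=
    (hπc.mul continuous_const).mul (hπc.comp continuous_inv)
  have hint : Integrable (fun x : G => pihM ρ x * A * pihM ρ x⁻¹) μ :=
    hcf.integrable_of_hasCompactSupport (HasCompactSupport.of_compactSpace _)
  set T := ∫ x, pihM ρ x * A * pihM ρ x⁻¹ ∂μ with hT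
  have hconj : ∀ g, pihM ρ g * T * pihM ρ g⁻¹ = T := by
    intro g
    have h1 : pihM ρ g * T = ∫ x, pihM ρ g * (pihM ρ x * A * pihM ρ x⁻¹) ∂μ :=
      ((ContinuousLinearMap.mul ℂ (V →L[ℂ] V) (pihM ρ g)).integral_comp_comm hint).symm
    have hint2 : Integrable (fun x : G => pihM ρ g * (pihM ρ x * A * pihM ρ x⁻¹)) μ :=
      (ContinuousLinearMap.mul ℂ (V →L[ℂ] V) (pihM ρ g)).integrable_comp hint
    have h2 : (pihM ρ g * T) * pihM ρ g⁻¹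
        = ∫ x, (pihM ρ g * (pihM ρ x * A * pihM ρ x⁻¹)) * pihM ρ g⁻¹ ∂μ := by
      rw [h1]
      exact (((ContinuousLinearMap.mul ℂ (V →L[ℂ] V)).flip (pihM ρ g⁻¹)).integral_comp_comm
        hint2).symm
    rw [h2]
    have h3 : (fun x : G => (pihM ρ g * (pihM ρ x * A * pihM ρ x⁻¹)) * pihM ρ g⁻¹)
        = fun x : G => pihM ρ (g * x) * A * pihM ρ (g * x)⁻¹ := by
      funext x
      simp only [mul_inv_rev, map_mul]
      noncomm_ring
    rw [h3]
    exact integral_mul_left_eq_self (fun x : G => pihM ρ x * A * pihM ρ x⁻¹) g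
  have hcomm : ∀ g, pihM ρ g * T = T * pihM ρ g := by
    intro g
    have h := congrArg (· * pihM ρ g) (hconj g)
    simpa only [mul_assoc, ← map_mul, inv_mul_cancel, map_one, mul_one] using h
  have hsc := scalar_of_comm ρ hirr T hcomm
  have htrT : trC V T = trC V A := by
    have h0 : trC V T = ∫ x, trC V (pihM ρ x * A * pihM ρ x⁻¹) ∂μ :=
      ((trC V).integral_comp_comm hint).symm
    rw [h0]
    simp_rw [trace_conj]
    simp [measure_univ]
  rw [hsc, htrT]

lemma lemA' (hcont : Continuous fun p : G × V => ρ p.1 p.2)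
    (hirr : ∀ W : Submodule ℂ V,
      (∀ g : G, W.map ((ρ g).toLinearEquiv : V →ₗ[ℂ] V) = W) → W = ⊥ ∨ W = ⊤)
    (A : V →L[ℂ] V) :
    ∫ x, pihM ρ x⁻¹ * A * pihM ρ x ∂μ
      = (trC V A / (Module.finrank ℂ V : ℂ)) • 1 := by
  haveI := compact_right_inv μ
  have hπc := pihM_cont ρ hcont
  have hcf : Continuous fun x : G => pihM ρ x⁻¹ * A * pihM ρ x :=
    (((hπc.comp continuous_inv).mul continuous_const).mul hπc)
  have hint : Integrable (fun x : G => pihM ρ x⁻¹ * A * pihM ρ x) μ :=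
    hcf.integrable_of_hasCompactSupport (HasCompactSupport.of_compactSpace _)
  set T := ∫ x, pihM ρ x⁻¹ * A * pihM ρ x ∂μ with hT
  have hconj : ∀ g, pihM ρ g * T * pihM ρ g⁻¹ = T := by
    intro g
    have h1 : pihM ρ g * T = ∫ x, pihM ρ g * (pihM ρ x⁻¹ * A * pihM ρ x) ∂μ :=
      ((ContinuousLinearMap.mul ℂ (V →L[ℂ] V) (pihM ρ g)).integral_comp_comm hint).symm
    have hint2 : Integrable (fun x : G => pihM ρ g * (pihM ρ x⁻¹ * A * pihM ρ x)) μ :=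
      (ContinuousLinearMap.mul ℂ (V →L[ℂ] V) (pihM ρ g)).integrable_comp hint
    have h2 : (pihM ρ g * T) * pihM ρ g⁻¹
        = ∫ x, (pihM ρ g * (pihM ρ x⁻¹ * A * pihM ρ x)) * pihM ρ g⁻¹ ∂μ := by
      rw [h1]
      exact (((ContinuousLinearMap.mul ℂ (V →L[ℂ] V)).flip (pihM ρ g⁻¹)).integral_comp_comm
        hint2).symm
    rw [h2]
    have h3 : (fun x : G => (pihM ρ g * (pihM ρ x⁻¹ * A * pihM ρ x)) * pihM ρ g⁻¹)
        = fun x : G => pihM ρ (x * g⁻¹)⁻¹ * A * pihM ρ (x * g⁻¹) := by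
      funext x
      simp only [mul_inv_rev, map_mul, inv_inv]
      noncomm_ring
    rw [h3]
    exact integral_mul_right_eq_self (fun x : G => pihM ρ x⁻¹ * A * pihM ρ x) g⁻¹
  have hcomm : ∀ g, pihM ρ g * T = T * pihM ρ g := by
    intro g
    have h := congrArg (· * pihM ρ g) (hconj g)
    simpa only [mul_assoc, ← map_mul, inv_mul_cancel, map_one, mul_one] using h
  have hsc := scalar_of_comm ρ hirr T hcomm
  have htrT : trC V T = trC V A := by
    have h0 : trC V T = ∫ x, trC V (pihM ρ x⁻¹ * A * pihM ρ x) ∂μ :=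
      ((trC V).integral_comp_comm hint).symm
    rw [h0]
    have : ∀ x : G, trC V (pihM ρ x⁻¹ * A * pihM ρ x) = trC V A := by
      intro x
      have := trace_conj ρ x⁻¹ A
      rwa [inv_inv] at this
    simp_rw [this]
    simp [measure_univ]
  rw [hsc, htrT]

end Integralx

section LemJ
variable {G : Type*} [Group G] [TopologicalSpace G] [IsTopologicalGroup G] [CompactSpace G]
  [MeasurableSpace G] [BorelSpace G]
  {V : Type*} [NormedAddCommGroup V] [InnerProductSpace ℂ V] [FiniteDimensional ℂ V]
  (μ : Measure G) [μ.IsHaarMeasure] [IsProbabilityMeasure μ]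
  (ρ : G →* (V ≃ₗᵢ[ℂ] V))

lemma trC_eq_sum_inner (b : OrthonormalBasis (Fin (Module.finrank ℂ V)) ℂ V) (f : V →L[ℂ] V) :
    trC V f = ∑ i, (inner ℂ (b i) (f (b i)) : ℂ) := by
  classical
  rw [trC_apply, LinearMap.trace_eq_matrix_trace ℂ b.toBasis, Matrix.trace]
  congr 1
  funext i
  rw [Matrix.diag_apply, LinearMap.toMatrix_apply, OrthonormalBasis.coe_toBasis_repr_apply,
    OrthonormalBasis.repr_apply_apply, OrthonormalBasis.coe_toBasis]
  rfl

lemma lemJ (hcont : Continuous fun p : G × V => ρ p.1 p.2)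
    (hirr : ∀ W : Submodule ℂ V,
      (∀ g : G, W.map ((ρ g).toLinearEquiv : V →ₗ[ℂ] V) = W) → W = ⊥ ∨ W = ⊤)
    (χ : G → ℂ) (hχ : ∀ g, χ g = trC V (pihM ρ g)) (g : G) :
    ∫ y, χ y * χ (y⁻¹ * g) ∂μ = χ g / (Module.finrank ℂ V : ℂ) := by
  classical
  set n := Module.finrank ℂ V with hn
  set b := stdOrthonormalBasis ℂ V with hb
  have hπc := pihM_cont ρ hcont
  set A : Fin n → Fin n → (V →L[ℂ] V) :=
    fun a c => (innerSL ℂ (b c)).smulRight (b a) with hA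
  -- pointwise expansion
  have step1 : ∀ y : G, χ y * χ (y⁻¹ * g)
      = ∑ a : Fin n, ∑ c : Fin n,
        (inner ℂ (b a) ((pihM ρ y * A a c * pihM ρ y⁻¹) (pihM ρ g (b c))) : ℂ) := by
    intro y
    rw [hχ y, hχ (y⁻¹ * g), trC_eq_sum_inner b, trC_eq_sum_inner b, Finset.sum_mul_sum]
    congr 1; funext a; congr 1; funext c
    have h1 : (pihM ρ y * A a c * pihM ρ y⁻¹) (pihM ρ g (b c))
        = (inner ℂ (b c) (pihM ρ y⁻¹ (pihM ρ g (b c))) : ℂ) • pihM ρ y (b a) := by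
      simp only [ContinuousLinearMap.mul_apply, hA, ContinuousLinearMap.smulRight_apply,
        innerSL_apply_apply]
      exact (pihM ρ y).map_smul _ _
    rw [h1, inner_smul_right]
    have h2 : pihM ρ (y⁻¹ * g) (b c) = pihM ρ y⁻¹ (pihM ρ g (b c)) := by
      rw [map_mul]; rfl
    rw [h2]
    ring
  simp_rw [step1]
  -- integrability of each summand
  have hintF : ∀ a c : Fin n,
      Integrable (fun y : G => pihM ρ y * A a c * pihM ρ y⁻¹) μ := by
    intro a c
    exact ((hπc.mul continuous_const).mul
      (hπc.comp continuous_inv)).integrable_of_hasCompactSupport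
      (HasCompactSupport.of_compactSpace _)
  set Φ : Fin n → Fin n → ((V →L[ℂ] V) →L[ℂ] ℂ) :=
    fun a c => (innerSL ℂ (b a)).comp ((ContinuousLinearMap.apply ℂ V) (pihM ρ g (b c))) with hΦ
  have hΦap : ∀ (a c : Fin n) (T : V →L[ℂ] V),
      Φ a c T = (inner ℂ (b a) (T (pihM ρ g (b c))) : ℂ) := fun a c T => rfl
  have hswap : ∫ y, ∑ a : Fin n, ∑ c : Fin n,
        (inner ℂ (b a) ((pihM ρ y * A a c * pihM ρ y⁻¹) (pihM ρ g (b c))) : ℂ) ∂μ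
      = ∑ a : Fin n, ∑ c : Fin n,
        Φ a c (∫ y, pihM ρ y * A a c * pihM ρ y⁻¹ ∂μ) := by
    rw [integral_finset_sum]
    · congr 1; funext a
      rw [integral_finset_sum]
      · congr 1; funext c
        exact (Φ a c).integral_comp_comm (hintF a c)
      · intro c _
        exact (Φ a c).integrable_comp (hintF a c)
    · intro a _
      apply integrable_finset_sum
      intro c _
      exact (Φ a c).integrable_comp (hintF a c)
  rw [hswap]
  have htrA : ∀ a c : Fin n, trC V (A a c) = (inner ℂ (b c) (b a) : ℂ) := by
    intro a c
    rw [trC_eq_sum_inner b]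
    simp only [hA, ContinuousLinearMap.smulRight_apply, innerSL_apply_apply, inner_smul_right]
    exact b.sum_inner_mul_inner (b c) (b a)
  have horth : ∀ a c : Fin n, (inner ℂ (b c) (b a) : ℂ) = if c = a then 1 else 0 :=
    fun a c => orthonormal_iff_ite.mp b.orthonormal c a
  have hfin : ∀ a c : Fin n, Φ a c (∫ y, pihM ρ y * A a c * pihM ρ y⁻¹ ∂μ)
      = (if c = a then 1 else 0) / (n : ℂ) * (inner ℂ (b a) (pihM ρ g (b c)) : ℂ) := by
    intro a c
    rw [lemA μ ρ hcont hirr (A a c), ContinuousLinearMap.map_smul, hΦap, htrA, horth]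
    simp only [ContinuousLinearMap.one_apply, smul_eq_mul]
    rfl
  simp_rw [hfin]
  have : ∀ a : Fin n, ∑ c : Fin n,
      (if c = a then 1 else 0) / (n : ℂ) * (inner ℂ (b a) (pihM ρ g (b c)) : ℂ)
      = (1 / (n : ℂ)) * (inner ℂ (b a) (pihM ρ g (b a)) : ℂ) := by
    intro a
    rw [Finset.sum_eq_single a]
    · simp
    · intro c _ hc; simp [hc]
    · intro h; simp at h
  simp_rw [this]
  rw [← Finset.mul_sum, ← trC_eq_sum_inner b, ← hχ g]
  ring
end LemJ

section LemB
variable {G : Type*} [Group G] [TopologicalSpace G] [IsTopologicalGroup G] [CompactSpace G]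
  [MeasurableSpace G] [BorelSpace G]
  {V : Type*} [NormedAddCommGroup V] [InnerProductSpace ℂ V] [FiniteDimensional ℂ V]
  (μ : Measure G) [μ.IsHaarMeasure] [IsProbabilityMeasure μ]
  (ρ : G →* (V ≃ₗᵢ[ℂ] V))

lemma lemB (hcont : Continuous fun p : G × V => ρ p.1 p.2)
    (hirr : ∀ W : Submodule ℂ V,
      (∀ g : G, W.map ((ρ g).toLinearEquiv : V →ₗ[ℂ] V) = W) → W = ⊥ ∨ W = ⊤)
    (χ : G → ℂ) (hχ : ∀ g, χ g = trC V (pihM ρ g)) (u c : G) :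
    ∫ a, χ (u⁻¹ * a⁻¹ * u * a * c) ∂μ
      = χ u / (Module.finrank ℂ V : ℂ) * χ (u⁻¹ * c) := by
  have hπc := pihM_cont ρ hcont
  set E := V →L[ℂ] V
  set Ψ : E →L[ℂ] ℂ := (trC V).comp ((ContinuousLinearMap.mul ℂ E (pihM ρ u⁻¹)).comp
    ((ContinuousLinearMap.mul ℂ E).flip (pihM ρ c))) with hΨ
  have hΨap : ∀ T : E, Ψ T = trC V (pihM ρ u⁻¹ * (T * pihM ρ c)) := fun T => rfl
  have hpt : ∀ a : G, χ (u⁻¹ * a⁻¹ * u * a * c)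
      = Ψ (pihM ρ a⁻¹ * pihM ρ u * pihM ρ a) := by
    intro a
    rw [hχ, hΨap]
    congr 1
    simp only [map_mul]
    noncomm_ring
  simp_rw [hpt]
  have hF : Integrable (fun a : G => pihM ρ a⁻¹ * pihM ρ u * pihM ρ a) μ :=
    (((hπc.comp continuous_inv).mul continuous_const).mul
      hπc).integrable_of_hasCompactSupport (HasCompactSupport.of_compactSpace _)
  rw [Ψ.integral_comp_comm hF]
  have hA' := lemA' μ ρ hcont hirr (pihM ρ u)
  rw [hA', ContinuousLinearMap.map_smul, hΨap]
  rw [one_mul, ← map_mul, ← hχ, ← hχ]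
  simp only [smul_eq_mul]
end LemB

section Meas
variable {G : Type*} [Group G] [TopologicalSpace G] [IsTopologicalGroup G] [CompactSpace G]
  [MeasurableSpace G] [BorelSpace G]
  {V : Type*} [NormedAddCommGroup V] [InnerProductSpace ℂ V] [FiniteDimensional ℂ V]
  (ρ : G →* (V ≃ₗᵢ[ℂ] V))

lemma pihM_norm_le (g : G) : ‖pihM ρ g‖ ≤ 1 := by
  refine ContinuousLinearMap.opNorm_le_bound _ zero_le_one (fun v => ?_)
  rw [pihM_apply, (ρ g).norm_map, one_mul]

lemma pihM_sm (hcont : Continuous fun p : G × V => ρ p.1 p.2) :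
    StronglyMeasurable (pihM ρ) :=
  (pihM_cont ρ hcont).stronglyMeasurable

lemma good_comp {X : Type*} [MeasurableSpace X]
    (hcont : Continuous fun p : G × V => ρ p.1 p.2) {w : X → G} (hw : Measurable w) :
    StronglyMeasurable fun x => pihM ρ (w x) :=
  (pihM_sm ρ hcont).comp_measurable hw

lemma good_ofFnProd {X : Type*} [MeasurableSpace X] :
    ∀ {m : ℕ} (F : Fin m → X → G),
      (∀ i, StronglyMeasurable fun x => pihM ρ (F i x)) →
      StronglyMeasurable fun x => pihM ρ (List.ofFn fun i => F i x).prod := by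
  intro m
  induction m with
  | zero =>
    intro F h
    simp only [List.ofFn_zero, List.prod_nil, map_one]
    exact stronglyMeasurable_const
  | succ m ih =>
    intro F h
    have heq : (fun x => pihM ρ (List.ofFn fun i => F i x).prod)
        = fun x => pihM ρ (F 0 x) * pihM ρ (List.ofFn fun i : Fin m => F i.succ x).prod := by
      funext x
      rw [List.ofFn_succ, List.prod_cons, map_mul]
    rw [heq]
    exact (h 0).mul (ih (fun i => F i.succ) (fun i => h i.succ))

lemma chi_norm_le (χ : G → ℂ) (hχ : ∀ g, χ g = trC V (pihM ρ g)) (g : G) :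
    ‖χ g‖ ≤ ‖trC V‖ := by
  rw [hχ]
  calc ‖trC V (pihM ρ g)‖ ≤ ‖trC V‖ * ‖pihM ρ g‖ := (trC V).le_opNorm _
  _ ≤ ‖trC V‖ * 1 := by
      have := pihM_norm_le ρ g
      gcongr
  _ = ‖trC V‖ := mul_one _

lemma sm_chi {X : Type*} [MeasurableSpace X] (χ : G → ℂ)
    (hχ : ∀ g, χ g = trC V (pihM ρ g)) {w : X → G}
    (hw : StronglyMeasurable fun x => pihM ρ (w x)) :
    StronglyMeasurable fun x => χ (w x) := by
  have heq : (fun x => χ (w x)) = fun x => trC V (pihM ρ (w x)) := funext fun x => hχ _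
  rw [heq]
  exact (trC V).continuous.comp_stronglyMeasurable hw

lemma integrable_of_sm_bounded {X : Type*} [MeasurableSpace X] (ν : Measure X)
    [IsFiniteMeasure ν] (f : X → ℂ) (hsm : StronglyMeasurable f) (C : ℝ)
    (hb : ∀ x, ‖f x‖ ≤ C) : Integrable f ν :=
  Integrable.mono' (integrable_const C) hsm.aestronglyMeasurable
    (Filter.Eventually.of_forall hb)

end Meas

section Peel
variable {G : Type*} [Group G] [TopologicalSpace G] [IsTopologicalGroup G] [CompactSpace G]
  [MeasurableSpace G] [BorelSpace G]
  (μ : Measure G) [μ.IsHaarMeasure] [IsProbabilityMeasure μ]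

lemma peel {k : ℕ} (f : (Fin (k+1) → G) → ℂ)
    (hf : Integrable (fun p : G × (Fin k → G) => f (Fin.cons p.1 p.2))
      (μ.prod (Measure.pi fun _ => μ))) :
    ∫ z, f z ∂(Measure.pi fun _ : Fin (k+1) => μ)
      = ∫ a, ∫ w, f (Fin.cons a w) ∂(Measure.pi fun _ : Fin k => μ) ∂μ := by
  have hmp := measurePreserving_piFinSuccAbove (fun _ : Fin (k+1) => μ) 0
  have hme := (MeasurableEquiv.piFinSuccAbove (fun _ : Fin (k+1) => G) 0).measurableEmbedding
  set e := MeasurableEquiv.piFinSuccAbove (fun _ : Fin (k+1) => G) 0 with he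
  have hsymm : ∀ p : G × (Fin k → G), e.symm p = Fin.cons p.1 p.2 := by
    intro p
    show (Fin.insertNthEquiv (fun _ : Fin (k+1) => G) 0) p = Fin.cons p.1 p.2
    rw [Fin.insertNthEquiv_zero]
    rfl
  have h1 : ∫ z, f z ∂(Measure.pi fun _ : Fin (k+1) => μ)
      = ∫ p, f (e.symm p) ∂(μ.prod (Measure.pi fun _ : Fin k => μ)) := by
    rw [← hmp.integral_comp hme (fun p => f (e.symm p))]
    congr 1
    funext z
    rw [e.symm_apply_apply]
  rw [h1]
  have h2 : (fun p : G × (Fin k → G) => f (e.symm p))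
      = fun p => f (Fin.cons p.1 p.2) := funext fun p => by rw [hsymm]
  rw [h2]
  exact integral_prod _ hf

end Peel

section Main
variable {G : Type*} [Group G] [TopologicalSpace G] [IsTopologicalGroup G] [CompactSpace G]
  [MeasurableSpace G] [BorelSpace G]
  {V : Type*} [NormedAddCommGroup V] [InnerProductSpace ℂ V] [FiniteDimensional ℂ V]
  (μ : Measure G) [μ.IsHaarMeasure] [IsProbabilityMeasure μ]
  (ρ : G →* (V ≃ₗᵢ[ℂ] V))

lemma chi_comm (χ : G → ℂ) (hχ : ∀ g, χ g = trC V (pihM ρ g)) (s t : G) :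
    χ (s * t) = χ (t * s) := by
  rw [hχ, hχ, map_mul (pihM ρ) s t, map_mul (pihM ρ) t s, trC_apply, trC_apply]
  have h1 : ((pihM ρ s * pihM ρ t : V →L[ℂ] V) : V →ₗ[ℂ] V)
      = ((pihM ρ s : V →L[ℂ] V) : V →ₗ[ℂ] V) * ((pihM ρ t : V →L[ℂ] V) : V →ₗ[ℂ] V) := rfl
  have h2 : ((pihM ρ t * pihM ρ s : V →L[ℂ] V) : V →ₗ[ℂ] V)
      = ((pihM ρ t : V →L[ℂ] V) : V →ₗ[ℂ] V) * ((pihM ρ s : V →L[ℂ] V) : V →ₗ[ℂ] V) := rfl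
  rw [h1, h2, LinearMap.trace_mul_comm]

lemma good_mul {X : Type*} [MeasurableSpace X] {w₁ w₂ : X → G}
    (h1 : StronglyMeasurable fun x => pihM ρ (w₁ x))
    (h2 : StronglyMeasurable fun x => pihM ρ (w₂ x)) :
    StronglyMeasurable fun x => pihM ρ (w₁ x * w₂ x) := by
  have : (fun x => pihM ρ (w₁ x * w₂ x))
      = fun x => pihM ρ (w₁ x) * pihM ρ (w₂ x) := funext fun x => map_mul _ _ _
  rw [this]
  exact h1.mul h2

lemma good_const {X : Type*} [MeasurableSpace X] (c : G) :
    StronglyMeasurable fun _ : X => pihM ρ c := stronglyMeasurable_const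

lemma lemLz (hcont : Continuous fun p : G × V => ρ p.1 p.2)
    (hirr : ∀ W : Submodule ℂ V,
      (∀ g : G, W.map ((ρ g).toLinearEquiv : V →ₗ[ℂ] V) = W) → W = ⊥ ∨ W = ⊤)
    (χ : G → ℂ) (hχ : ∀ g, χ g = trC V (pihM ρ g)) :
    ∀ (k : ℕ) (y : Fin k → G) (c : G),
    ∫ z, χ ((List.ofFn fun i => (y i)⁻¹ * (z i)⁻¹ * y i * z i).prod * c)
        ∂(Measure.pi fun _ : Fin k => μ)
      = ((∏ i, χ (y i)) / (Module.finrank ℂ V : ℂ) ^ k)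
        * χ (c * (List.ofFn fun i => (y i)⁻¹).prod) := by
  intro k
  induction k with
  | zero =>
    intro y c
    simp only [List.ofFn_zero, List.prod_nil, one_mul, mul_one, Finset.univ_eq_empty,
      Finset.prod_empty, pow_zero, div_one]
    rw [integral_const, probReal_univ]
    simp
  | succ k ih =>
    intro y c
    set q : G → G := fun a => (y 0)⁻¹ * a⁻¹ * y 0 * a with hq
    set F : (Fin k → G) → G :=
      fun w => (List.ofFn fun i : Fin k => (y i.succ)⁻¹ * (w i)⁻¹ * y i.succ * w i).prod with hF
    set D' : G := (List.ofFn fun i : Fin k => (y i.succ)⁻¹).prod with hD'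
    have hcons : ∀ (a : G) (w : Fin k → G),
        (List.ofFn fun i : Fin (k+1) =>
            (y i)⁻¹ * ((Fin.cons a w : Fin (k+1) → G) i)⁻¹ * y i
              * (Fin.cons a w : Fin (k+1) → G) i).prod * c
          = q a * (F w * c) := by
      intro a w
      rw [List.ofFn_succ, List.prod_cons]
      simp only [Fin.cons_zero, Fin.cons_succ]
      rw [mul_assoc]
    have hint : Integrable (fun p : G × (Fin k → G) =>
        χ ((List.ofFn fun i : Fin (k+1) =>
            (y i)⁻¹ * ((Fin.cons p.1 p.2 : Fin (k+1) → G) i)⁻¹ * y i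
              * (Fin.cons p.1 p.2 : Fin (k+1) → G) i).prod * c))
        (μ.prod (Measure.pi fun _ : Fin k => μ)) := by
      refine integrable_of_sm_bounded _ _ ?_ ‖trC V‖ (fun x => chi_norm_le ρ χ hχ _)
      · apply sm_chi ρ χ hχ
        have heq : (fun p : G × (Fin k → G) => pihM ρ
            ((List.ofFn fun i : Fin (k+1) =>
              (y i)⁻¹ * ((Fin.cons p.1 p.2 : Fin (k+1) → G) i)⁻¹ * y i
                * (Fin.cons p.1 p.2 : Fin (k+1) → G) i).prod * c))
            = fun p => pihM ρ (q p.1 * (F p.2 * c)) := funext fun p => by rw [hcons]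
        rw [heq]
        apply good_mul
        · show StronglyMeasurable fun p : G × (Fin k → G) =>
            pihM ρ ((y 0)⁻¹ * p.1⁻¹ * y 0 * p.1)
          exact good_mul ρ (good_mul ρ (good_mul ρ (good_const ρ _)
            (good_comp ρ hcont measurable_fst.inv)) (good_const ρ _))
            (good_comp ρ hcont measurable_fst)
        · apply good_mul ρ _ (good_const ρ _)
          apply good_ofFnProd ρ
            (fun (i : Fin k) (p : G × (Fin k → G)) =>
              (y i.succ)⁻¹ * (p.2 i)⁻¹ * y i.succ * (p.2 i))
          intro i
          exact good_mul ρ (good_mul ρ (good_mul ρ (good_const ρ _)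
            (good_comp ρ hcont ((measurable_pi_apply i).comp measurable_snd).inv))
            (good_const ρ _))
            (good_comp ρ hcont ((measurable_pi_apply i).comp measurable_snd))
    rw [peel μ (fun z : Fin (k+1) → G =>
      χ ((List.ofFn fun i => (y i)⁻¹ * (z i)⁻¹ * y i * z i).prod * c)) hint]
    have hinner : ∀ a : G,
        ∫ w, χ ((List.ofFn fun i : Fin (k+1) =>
            (y i)⁻¹ * ((Fin.cons a w : Fin (k+1) → G) i)⁻¹ * y i
              * (Fin.cons a w : Fin (k+1) → G) i).prod * c)
          ∂(Measure.pi fun _ : Fin k => μ)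
        = ((∏ i : Fin k, χ (y i.succ)) / (Module.finrank ℂ V : ℂ) ^ k)
            * χ ((c * q a) * D') := by
      intro a
      have h1 : ∀ w : Fin k → G,
          χ ((List.ofFn fun i : Fin (k+1) =>
            (y i)⁻¹ * ((Fin.cons a w : Fin (k+1) → G) i)⁻¹ * y i
              * (Fin.cons a w : Fin (k+1) → G) i).prod * c)
          = χ (F w * (c * q a)) := by
        intro w
        rw [hcons, chi_comm ρ χ hχ (q a) (F w * c), mul_assoc]
      simp_rw [h1]
      exact ih (fun i => y i.succ) (c * q a)
    simp_rw [hinner]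
    rw [integral_const_mul]
    have h2 : ∀ a : G, χ ((c * q a) * D') = χ ((y 0)⁻¹ * a⁻¹ * y 0 * a * (D' * c)) := by
      intro a
      rw [chi_comm ρ χ hχ (c * q a) D', ← mul_assoc, chi_comm ρ χ hχ (D' * c) (q a)]
    simp_rw [h2]
    rw [lemB μ ρ hcont hirr χ hχ (y 0) (D' * c)]
    rw [Fin.prod_univ_succ]
    have hDfull : (List.ofFn fun i : Fin (k+1) => (y i)⁻¹).prod = (y 0)⁻¹ * D' := by
      rw [List.ofFn_succ, List.prod_cons]
    rw [hDfull]
    have hχeq : χ ((y 0)⁻¹ * (D' * c)) = χ (c * ((y 0)⁻¹ * D')) := by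
      rw [chi_comm ρ χ hχ c ((y 0)⁻¹ * D'), mul_assoc]
    rw [← hχeq]
    ring
lemma lemK (hcont : Continuous fun p : G × V => ρ p.1 p.2)
    (hirr : ∀ W : Submodule ℂ V,
      (∀ g : G, W.map ((ρ g).toLinearEquiv : V →ₗ[ℂ] V) = W) → W = ⊥ ∨ W = ⊤)
    (χ : G → ℂ) (hχ : ∀ g, χ g = trC V (pihM ρ g)) :
    ∀ (k : ℕ) (c : G),
    ∫ y, (∏ i, χ (y i)) * χ (c * (List.ofFn fun i => (y i)⁻¹).prod)
        ∂(Measure.pi fun _ : Fin k => μ)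
      = χ c / (Module.finrank ℂ V : ℂ) ^ k := by
  intro k
  induction k with
  | zero =>
    intro c
    simp only [List.ofFn_zero, List.prod_nil, mul_one, Finset.univ_eq_empty,
      Finset.prod_empty, pow_zero, div_one, one_mul]
    rw [integral_const, probReal_univ]
    simp
  | succ k ih =>
    intro c
    have hcons : ∀ (a : G) (w : Fin k → G),
        (∏ i : Fin (k+1), χ ((Fin.cons a w : Fin (k+1) → G) i))
            * χ (c * (List.ofFn fun i : Fin (k+1) =>
                ((Fin.cons a w : Fin (k+1) → G) i)⁻¹).prod)
          = χ a * ((∏ i : Fin k, χ (w i))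
            * χ ((c * a⁻¹) * (List.ofFn fun i : Fin k => (w i)⁻¹).prod)) := by
      intro a w
      rw [Fin.prod_univ_succ, List.ofFn_succ, List.prod_cons]
      simp only [Fin.cons_zero, Fin.cons_succ]
      rw [← mul_assoc c a⁻¹ _, mul_assoc]
    have hint : Integrable (fun p : G × (Fin k → G) =>
        (∏ i : Fin (k+1), χ ((Fin.cons p.1 p.2 : Fin (k+1) → G) i))
            * χ (c * (List.ofFn fun i : Fin (k+1) =>
                ((Fin.cons p.1 p.2 : Fin (k+1) → G) i)⁻¹).prod))
        (μ.prod (Measure.pi fun _ : Fin k => μ)) := by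
      refine integrable_of_sm_bounded _ _ ?_
        (‖trC V‖ * (‖trC V‖ ^ k * ‖trC V‖)) ?_
      · have heq : (fun p : G × (Fin k → G) =>
            (∏ i : Fin (k+1), χ ((Fin.cons p.1 p.2 : Fin (k+1) → G) i))
              * χ (c * (List.ofFn fun i : Fin (k+1) =>
                  ((Fin.cons p.1 p.2 : Fin (k+1) → G) i)⁻¹).prod))
            = fun p => χ p.1 * ((∏ i : Fin k, χ (p.2 i))
              * χ ((c * p.1⁻¹) * (List.ofFn fun i : Fin k => (p.2 i)⁻¹).prod)) :=
          funext fun p => hcons p.1 p.2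
        rw [heq]
        apply StronglyMeasurable.mul
        · exact sm_chi ρ χ hχ (good_comp ρ hcont measurable_fst)
        apply StronglyMeasurable.mul
        · exact Finset.stronglyMeasurable_fun_prod _ (fun i _ =>
            sm_chi ρ χ hχ (good_comp ρ hcont ((measurable_pi_apply i).comp measurable_snd)))
        · apply sm_chi ρ χ hχ
          apply good_mul ρ
          · exact good_mul ρ (good_const ρ c) (good_comp ρ hcont measurable_fst.inv)
          · apply good_ofFnProd ρ (fun (i : Fin k) (p : G × (Fin k → G)) => (p.2 i)⁻¹)
            intro i
            exact good_comp ρ hcont ((measurable_pi_apply i).comp measurable_snd).inv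
      · intro p
        rw [hcons p.1 p.2, norm_mul, norm_mul]
        have hB : (0:ℝ) ≤ ‖trC V‖ := ContinuousLinearMap.opNorm_nonneg _
        have h1 := chi_norm_le ρ χ hχ p.1
        have h2 : ‖∏ i : Fin k, χ (p.2 i)‖ ≤ ‖trC V‖ ^ k := by
          rw [norm_prod]
          calc ∏ i : Fin k, ‖χ (p.2 i)‖ ≤ ∏ _i : Fin k, ‖trC V‖ :=
                Finset.prod_le_prod (fun i _ => norm_nonneg _)
                  (fun i _ => chi_norm_le ρ χ hχ _)
          _ = ‖trC V‖ ^ k := by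
                rw [Finset.prod_const, Finset.card_univ, Fintype.card_fin]
        have h3 := chi_norm_le ρ χ hχ ((c * p.1⁻¹)
          * (List.ofFn fun i : Fin k => (p.2 i)⁻¹).prod)
        have hn2 : (0:ℝ) ≤ ‖∏ i : Fin k, χ (p.2 i)‖ := norm_nonneg _
        have hn3 : (0:ℝ) ≤ ‖χ ((c * p.1⁻¹)
          * (List.ofFn fun i : Fin k => (p.2 i)⁻¹).prod)‖ := norm_nonneg _
        gcongr
    rw [peel μ (fun y : Fin (k+1) → G =>
      (∏ i, χ (y i)) * χ (c * (List.ofFn fun i => (y i)⁻¹).prod)) hint]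
    have hinner : ∀ a : G,
        ∫ w, (∏ i : Fin (k+1), χ ((Fin.cons a w : Fin (k+1) → G) i))
            * χ (c * (List.ofFn fun i : Fin (k+1) =>
                ((Fin.cons a w : Fin (k+1) → G) i)⁻¹).prod)
          ∂(Measure.pi fun _ : Fin k => μ)
        = χ a * (χ (c * a⁻¹) / (Module.finrank ℂ V : ℂ) ^ k) := by
      intro a
      simp_rw [hcons a]
      rw [integral_const_mul, ih (c * a⁻¹)]
    simp_rw [hinner]
    have h2 : ∀ a : G, χ a * (χ (c * a⁻¹) / (Module.finrank ℂ V : ℂ) ^ k)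
        = (χ a * χ (a⁻¹ * c)) / (Module.finrank ℂ V : ℂ) ^ k := by
      intro a
      rw [chi_comm ρ χ hχ c a⁻¹]
      ring
    simp_rw [h2]
    rw [integral_div, lemJ μ ρ hcont hirr χ hχ c, div_div, ← pow_succ']

end Main

theorem compact_group_character_product_of_commutators
    {G : Type*} [Group G] [TopologicalSpace G] [IsTopologicalGroup G] [CompactSpace G]
    [MeasurableSpace G] [BorelSpace G]
    (μ : Measure G) [μ.IsHaarMeasure] [IsProbabilityMeasure μ]
    {V : Type*} [NormedAddCommGroup V] [InnerProductSpace ℂ V] [FiniteDimensional ℂ V]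
    (ρ : G →* (V ≃ₗᵢ[ℂ] V))
    (hcont : Continuous fun p : G × V => ρ p.1 p.2)
    (hirr : ∀ W : Submodule ℂ V,
      (∀ g : G, W.map ((ρ g).toLinearEquiv : V →ₗ[ℂ] V) = W) → W = ⊥ ∨ W = ⊤)
    (χ : G → ℂ) (hχ : ∀ g, χ g = LinearMap.trace ℂ V ((ρ g).toLinearEquiv : V →ₗ[ℂ] V))
    (k : ℕ) (hk : 1 ≤ k) :
    ∫ y : Fin k → G, ∫ z : Fin k → G,
        χ (List.ofFn fun i => (y i)⁻¹ * (z i)⁻¹ * y i * z i).prod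
        ∂(Measure.pi fun _ => μ) ∂(Measure.pi fun _ => μ)
      = 1 / (Module.finrank ℂ V : ℂ) ^ (2 * k - 1) := by
  have hχ' : ∀ g, χ g = trC V (pihM ρ g) := by
    intro g
    rw [hχ g, trC_apply]
    congr 1
  have hLz : ∀ y : Fin k → G,
      ∫ z, χ (List.ofFn fun i => (y i)⁻¹ * (z i)⁻¹ * y i * z i).prod
          ∂(Measure.pi fun _ : Fin k => μ)
        = ((∏ i, χ (y i)) / (Module.finrank ℂ V : ℂ) ^ k)
            * χ (List.ofFn fun i => (y i)⁻¹).prod := by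
    intro y
    have h := lemLz μ ρ hcont hirr χ hχ' k y 1
    simpa [mul_one, one_mul] using h
  simp_rw [hLz]
  have hre : ∀ y : Fin k → G,
      ((∏ i, χ (y i)) / (Module.finrank ℂ V : ℂ) ^ k)
          * χ (List.ofFn fun i => (y i)⁻¹).prod
        = ((∏ i, χ (y i)) * χ (1 * (List.ofFn fun i => (y i)⁻¹).prod))
            / (Module.finrank ℂ V : ℂ) ^ k := by
    intro y
    rw [one_mul]
    ring
  simp_rw [hre]
  rw [integral_div, lemK μ ρ hcont hirr χ hχ' k 1]
  have hχ1 : χ 1 = (Module.finrank ℂ V : ℂ) := by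
    rw [hχ' 1, map_one, trC_apply]
    have h1 : ((1 : V →L[ℂ] V) : V →ₗ[ℂ] V) = LinearMap.id := rfl
    rw [h1]
    exact LinearMap.trace_id ℂ V
  rw [hχ1]
  by_cases hn0 : (Module.finrank ℂ V : ℂ) = 0
  · have h2k : 2 * k - 1 ≠ 0 := by omega
    rw [hn0]
    simp [zero_pow h2k]
  · rw [div_div, ← pow_add]
    have hk2 : k + k = (2 * k - 1) + 1 := by omega
    rw [hk2, pow_succ', div_mul_eq_div_div, div_self hn0]
end

section
/- The number of up-down tableaux of shape ∅ and length r is 0 if r is odd, and equals (r-1)(r-3)⋯3·1 = (r-1)!! if r is even. -/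
/-- Two Young diagrams differ by adding or removing exactly one box. -/
def UpDownStep (μ ν : YoungDiagram) : Prop :=
  (μ ≤ ν ∧ ν.card = μ.card + 1) ∨ (ν ≤ μ ∧ μ.card = ν.card + 1)

/-- The set of up-down tableaux of length `r` and shape `lam`. -/
def UpDownTableaux (r : ℕ) (lam : YoungDiagram) : Set (Fin (r + 1) → YoungDiagram) :=
  {T | T 0 = ⊥ ∧ T (Fin.last r) = lam ∧
    ∀ i : Fin r, UpDownStep (T i.castSucc) (T i.succ)}

namespace UDAux
open YoungDiagram Finset

instance : DecidableEq YoungDiagram :=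
  fun μ ν => decidable_of_iff (μ.cells = ν.cells) ⟨YoungDiagram.ext, fun h => by rw [h]⟩

lemma le_iff_cells {μ ν : YoungDiagram} : μ ≤ ν ↔ μ.cells ⊆ ν.cells := cells_subset_iff.symm

lemma eq_of_le_of_card_le {μ ν : YoungDiagram} (h : μ ≤ ν) (hc : ν.card ≤ μ.card) : μ = ν :=
  YoungDiagram.ext (Finset.eq_of_subset_of_card_le (le_iff_cells.mp h) hc)

lemma card_mono {μ ν : YoungDiagram} (h : μ ≤ ν) : μ.card ≤ ν.card :=
  Finset.card_le_card (le_iff_cells.mp h)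

/-- rows where a cell can be added -/
def addRows (μ : YoungDiagram) : Finset ℕ :=
  (Finset.range (μ.colLen 0 + 1)).filter (fun i => i = 0 ∨ μ.rowLen i < μ.rowLen (i - 1))

/-- rows where a cell can be removed -/
def remRows (μ : YoungDiagram) : Finset ℕ :=
  (Finset.range (μ.colLen 0)).filter (fun i => μ.rowLen (i + 1) < μ.rowLen i)

lemma rowLen_pos_iff {μ : YoungDiagram} {i : ℕ} : 0 < μ.rowLen i ↔ i < μ.colLen 0 := by
  rw [← mem_iff_lt_rowLen, mem_iff_lt_colLen]

lemma mem_addRows {μ : YoungDiagram} {i : ℕ} :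
    i ∈ addRows μ ↔ i = 0 ∨ μ.rowLen i < μ.rowLen (i - 1) := by
  simp only [addRows, mem_filter, mem_range, and_iff_right_iff_imp]
  rintro (rfl | h)
  · omega
  · have : 0 < μ.rowLen (i - 1) := by omega
    have := rowLen_pos_iff.mp this
    omega

lemma mem_remRows {μ : YoungDiagram} {i : ℕ} :
    i ∈ remRows μ ↔ μ.rowLen (i + 1) < μ.rowLen i := by
  simp only [remRows, mem_filter, mem_range, and_iff_right_iff_imp]
  intro h
  exact rowLen_pos_iff.mp (by omega)

lemma card_addRows (μ : YoungDiagram) : (addRows μ).card = (remRows μ).card + 1 := by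
  have h0 : 0 ∈ addRows μ := mem_addRows.mpr (Or.inl rfl)
  have : addRows μ = insert 0 ((remRows μ).image (· + 1)) := by
    ext i
    simp only [mem_addRows, Finset.mem_insert, Finset.mem_image, mem_remRows]
    constructor
    · rintro (rfl | h)
      · exact Or.inl rfl
      · rcases Nat.eq_zero_or_pos i with rfl | hi
        · exact Or.inl rfl
        · exact Or.inr ⟨i - 1, by rw [Nat.sub_add_cancel hi]; exact h, by omega⟩
    · rintro (rfl | ⟨j, hj, rfl⟩)
      · exact Or.inl rfl
      · exact Or.inr (by simpa using hj)
  rw [this, Finset.card_insert_of_notMem (by simp), Finset.card_image_of_injective _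
    (add_left_injective 1)]


variable {μ : YoungDiagram}

/-- add a cell at the end of row `i` -/
def addCell (μ : YoungDiagram) (i : ℕ) (hi : i = 0 ∨ μ.rowLen i < μ.rowLen (i - 1)) :
    YoungDiagram where
  cells := insert (i, μ.rowLen i) μ.cells
  isLowerSet := by
    rintro ⟨c, d⟩ ⟨a, b⟩ ⟨hac, hbd⟩ hcd
    simp only [Finset.coe_insert, Set.mem_insert_iff, Finset.mem_coe, mem_cells] at hcd ⊢
    rcases hcd with h | h
    · -- (c,d) is the new cell
      obtain ⟨hc, hd⟩ : c = i ∧ d = μ.rowLen i := by simpa [Prod.ext_iff] using h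
      subst hc; subst hd
      simp only at hac hbd
      rcases eq_or_lt_of_le hac with rfl | hlt
      · rcases eq_or_lt_of_le hbd with hb | hlt'
        · exact Or.inl (by simp [hb])
        · exact Or.inr (mem_iff_lt_rowLen.mpr hlt')
      · refine Or.inr (mem_iff_lt_rowLen.mpr ?_)
        have h1 : a ≤ c - 1 := by omega
        have h2 : μ.rowLen (c - 1) ≤ μ.rowLen a := μ.rowLen_anti _ _ h1
        rcases hi with hc0 | hic
        · omega
        · omega
    · exact Or.inr (μ.isLowerSet ⟨hac, hbd⟩ h)

lemma mem_addCell {i : ℕ} (hi : i = 0 ∨ μ.rowLen i < μ.rowLen (i - 1)) {c : ℕ × ℕ} :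
    c ∈ addCell μ i hi ↔ c = (i, μ.rowLen i) ∨ c ∈ μ := by
  simp [addCell, ← mem_cells]

lemma le_addCell {i : ℕ} (hi : i = 0 ∨ μ.rowLen i < μ.rowLen (i - 1)) : μ ≤ addCell μ i hi :=
  cells_subset_iff.mp (Finset.subset_insert _ _)

lemma card_addCell {i : ℕ} (hi : i = 0 ∨ μ.rowLen i < μ.rowLen (i - 1)) :
    (addCell μ i hi).card = μ.card + 1 := by
  have : (i, μ.rowLen i) ∉ μ.cells := by
    rw [mem_cells, mem_iff_lt_rowLen]; omega
  simp [addCell, YoungDiagram.card, Finset.card_insert_of_notMem this]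

/-- remove the last cell of row `i` -/
def remCell (μ : YoungDiagram) (i : ℕ) (hi : μ.rowLen (i + 1) < μ.rowLen i) :
    YoungDiagram where
  cells := μ.cells.erase (i, μ.rowLen i - 1)
  isLowerSet := by
    rintro ⟨c, d⟩ ⟨a, b⟩ ⟨hac, hbd⟩ hcd
    simp only [Finset.coe_erase, Set.mem_diff, Finset.mem_coe, mem_cells,
      Set.mem_singleton_iff] at hcd ⊢
    obtain ⟨hcd, hne⟩ := hcd
    refine ⟨μ.isLowerSet ⟨hac, hbd⟩ hcd, ?_⟩
    intro hab
    obtain ⟨ha, hb⟩ : a = i ∧ b = μ.rowLen i - 1 := by simpa [Prod.ext_iff] using hab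
    simp only at hac hbd
    have hd : d < μ.rowLen c := mem_iff_lt_rowLen.mp hcd
    have h1 : μ.rowLen c ≤ μ.rowLen i := μ.rowLen_anti _ _ (by omega)
    have hci : c = i := by
      by_contra hci
      have : i + 1 ≤ c := by omega
      have := μ.rowLen_anti _ _ this
      omega
    exact hne (by simp [Prod.ext_iff]; omega)

lemma mem_remCell {i : ℕ} (hi : μ.rowLen (i + 1) < μ.rowLen i) {c : ℕ × ℕ} :
    c ∈ remCell μ i hi ↔ c ≠ (i, μ.rowLen i - 1) ∧ c ∈ μ := by
  simp [remCell, ← mem_cells]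

lemma corner_mem {i : ℕ} (hi : μ.rowLen (i + 1) < μ.rowLen i) : (i, μ.rowLen i - 1) ∈ μ := by
  rw [mem_iff_lt_rowLen]; omega

lemma remCell_le {i : ℕ} (hi : μ.rowLen (i + 1) < μ.rowLen i) : remCell μ i hi ≤ μ :=
  cells_subset_iff.mp (Finset.erase_subset _ _)

lemma card_remCell {i : ℕ} (hi : μ.rowLen (i + 1) < μ.rowLen i) :
    μ.card = (remCell μ i hi).card + 1 := by
  have h := corner_mem hi
  simp only [remCell, YoungDiagram.card]
  rw [Finset.card_erase_of_mem ((mem_cells _).mpr h)]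
  have : 0 < μ.cells.card := Finset.card_pos.mpr ⟨_, (mem_cells _).mpr h⟩
  omega



variable {μ ν ρ : YoungDiagram}

lemma rowLen_eq_of_mem_iff {μ : YoungDiagram} {i n : ℕ}
    (h : ∀ j, (i, j) ∈ μ ↔ j < n) : μ.rowLen i = n := by
  have h1 := fun j => (h j).symm.trans mem_iff_lt_rowLen
  have h2 := h1 n
  have h3 := h1 (μ.rowLen i)
  omega

/-- every cover is an `addCell` -/
lemma exists_addCell (h : μ ≤ ν) (hc : ν.card = μ.card + 1) :
    ∃ (i : ℕ) (hi : i = 0 ∨ μ.rowLen i < μ.rowLen (i - 1)), ν = addCell μ i hi := by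
  have hsub : μ.cells ⊆ ν.cells := cells_subset_iff.mpr h
  have hcard : (ν.cells \ μ.cells).card = 1 := by
    rw [Finset.card_sdiff_of_subset hsub]
    have : μ.cells.card + 1 = ν.cells.card := hc.symm
    omega
  obtain ⟨c, hc1⟩ := Finset.card_eq_one.mp hcard
  obtain ⟨i, j⟩ := c
  have hmemν : (i, j) ∈ ν := by
    have : (i, j) ∈ ν.cells \ μ.cells := hc1 ▸ Finset.mem_singleton_self _
    exact (mem_cells _).mp (Finset.mem_sdiff.mp this).1
  have hnotμ : (i, j) ∉ μ := by
    have : (i, j) ∈ ν.cells \ μ.cells := hc1 ▸ Finset.mem_singleton_self _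
    exact fun hm => (Finset.mem_sdiff.mp this).2 ((mem_cells _).mpr hm)
  have hother : ∀ x : ℕ × ℕ, x ∈ ν → x ≠ (i, j) → x ∈ μ := by
    intro x hx hne
    by_contra hxm
    have : x ∈ ν.cells \ μ.cells := Finset.mem_sdiff.mpr ⟨(mem_cells _).mpr hx,
      fun hm => hxm ((mem_cells _).mp hm)⟩
    rw [hc1, Finset.mem_singleton] at this
    exact hne this
  -- j = μ.rowLen i
  have hcells : ν.cells = insert (i, j) μ.cells := by
    apply Finset.Subset.antisymm
    · intro x hx
      rcases eq_or_ne x (i, j) with rfl | hne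
      · exact Finset.mem_insert_self _ _
      · exact Finset.mem_insert_of_mem ((mem_cells _).mpr
          (hother x ((mem_cells _).mp hx) hne))
    · intro x hx
      rcases Finset.mem_insert.mp hx with rfl | hx
      · exact (mem_cells _).mpr hmemν
      · exact hsub hx
  have hj : j = μ.rowLen i := by
    have hle : μ.rowLen i ≤ j := by
      by_contra hlt
      exact hnotμ (mem_iff_lt_rowLen.mpr (by omega))
    have hge : j ≤ μ.rowLen i := by
      by_contra hlt
      have : (i, μ.rowLen i) ∈ ν := ν.up_left_mem le_rfl (by omega) hmemν
      have : (i, μ.rowLen i) ∈ μ := hother _ this (by simp; omega)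
      rw [mem_iff_lt_rowLen] at this
      omega
    omega
  subst hj
  have hi : i = 0 ∨ μ.rowLen i < μ.rowLen (i - 1) := by
    rcases Nat.eq_zero_or_pos i with rfl | hipos
    · exact Or.inl rfl
    · refine Or.inr ?_
      have h1 : (i - 1, μ.rowLen i) ∈ ν := ν.up_left_mem (by omega) le_rfl hmemν
      have h2 : (i - 1, μ.rowLen i) ∈ μ := hother _ h1 (by simp [Prod.ext_iff]; omega)
      rw [mem_iff_lt_rowLen] at h2
      exact h2
  exact ⟨i, hi, YoungDiagram.ext (by rw [hcells]; rfl)⟩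

def aboveF (μ : YoungDiagram) : Finset YoungDiagram :=
  (addRows μ).attach.image fun i => addCell μ i.1 (mem_addRows.mp i.2)

def belowF (μ : YoungDiagram) : Finset YoungDiagram :=
  (remRows μ).attach.image fun i => remCell μ i.1 (mem_remRows.mp i.2)

lemma mem_aboveF : ν ∈ aboveF μ ↔ μ ≤ ν ∧ ν.card = μ.card + 1 := by
  constructor
  · intro h
    simp only [aboveF, Finset.mem_image, Finset.mem_attach, true_and] at h
    obtain ⟨⟨i, hi⟩, rfl⟩ := h
    exact ⟨le_addCell _, card_addCell _⟩
  · rintro ⟨h, hc⟩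
    obtain ⟨i, hi, rfl⟩ := exists_addCell h hc
    simp only [aboveF, Finset.mem_image]
    exact ⟨⟨i, mem_addRows.mpr hi⟩, Finset.mem_attach _ _, rfl⟩

lemma rowLen_addCell {i : ℕ} (hi : i = 0 ∨ μ.rowLen i < μ.rowLen (i - 1)) (k : ℕ) :
    (addCell μ i hi).rowLen k = if k = i then μ.rowLen i + 1 else μ.rowLen k := by
  apply rowLen_eq_of_mem_iff
  intro j
  rw [mem_addCell]
  split_ifs with hk
  · subst hk
    constructor
    · rintro (h | h)
      · simp [Prod.ext_iff] at h; omega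
      · rw [mem_iff_lt_rowLen] at h; omega
    · intro h
      rcases eq_or_lt_of_le (Nat.lt_succ_iff.mp h) with rfl | h
      · exact Or.inl rfl
      · exact Or.inr (mem_iff_lt_rowLen.mpr h)
  · rw [mem_iff_lt_rowLen]
    simp [Prod.ext_iff, hk]
lemma mem_belowF : ρ ∈ belowF μ ↔ ρ ≤ μ ∧ μ.card = ρ.card + 1 := by
  constructor
  · intro h
    simp only [belowF, Finset.mem_image, Finset.mem_attach, true_and] at h
    obtain ⟨⟨i, hi⟩, rfl⟩ := h
    exact ⟨remCell_le _, card_remCell _⟩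
  · rintro ⟨h, hc⟩
    obtain ⟨i, hi, rfl⟩ := exists_addCell h hc
    have hrow := rowLen_addCell hi
    have hrem : (addCell ρ i hi).rowLen (i + 1) < (addCell ρ i hi).rowLen i := by
      rw [hrow, hrow]
      have := ρ.rowLen_anti i (i + 1) (by omega)
      split_ifs <;> omega
    simp only [belowF, Finset.mem_image]
    refine ⟨⟨i, mem_remRows.mpr hrem⟩, Finset.mem_attach _ _, ?_⟩
    apply YoungDiagram.ext
    show (addCell ρ i hi).cells.erase _ = ρ.cells
    have h1 : (addCell ρ i hi).rowLen i - 1 = ρ.rowLen i := by rw [hrow]; simp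
    rw [h1]
    show (insert (i, ρ.rowLen i) ρ.cells).erase (i, ρ.rowLen i) = ρ.cells
    exact Finset.erase_insert (by rw [mem_cells, mem_iff_lt_rowLen]; omega)

lemma card_aboveF (μ : YoungDiagram) : (aboveF μ).card = (addRows μ).card := by
  rw [aboveF, Finset.card_image_of_injOn, Finset.card_attach]
  rintro ⟨i, hi⟩ - ⟨i', hi'⟩ - h
  change addCell μ i (mem_addRows.mp hi) = addCell μ i' (mem_addRows.mp hi') at h
  have h1 : (i, μ.rowLen i) ∈ addCell μ i' (mem_addRows.mp hi') := by
    rw [← h, mem_addCell]; exact Or.inl rfl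
  rw [mem_addCell] at h1
  rcases h1 with h1 | h1
  · simp only [Prod.mk.injEq] at h1
    simp [h1.1]
  · rw [mem_iff_lt_rowLen] at h1; omega

lemma card_belowF (μ : YoungDiagram) : (belowF μ).card = (remRows μ).card := by
  rw [belowF, Finset.card_image_of_injOn, Finset.card_attach]
  rintro ⟨i, hi⟩ - ⟨i', hi'⟩ - h
  change remCell μ i (mem_remRows.mp hi) = remCell μ i' (mem_remRows.mp hi') at h
  by_contra hne
  have hne' : i ≠ i' := by simpa using hne
  have h1 : (i, μ.rowLen i - 1) ∈ remCell μ i' (mem_remRows.mp hi') := by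
    rw [mem_remCell]
    exact ⟨by simp [Prod.ext_iff]; omega, corner_mem (mem_remRows.mp hi)⟩
  rw [← h, mem_remCell] at h1
  exact h1.1 rfl

/-- Key: number of covers above = number below + 1. -/
lemma card_aboveF_eq (μ : YoungDiagram) : (aboveF μ).card = (belowF μ).card + 1 := by
  rw [card_aboveF, card_belowF, card_addRows]


end UDAux
section P4
namespace UDAux
open YoungDiagram Finset

variable {μ ν ρ : YoungDiagram}

lemma card_bot : (⊥ : YoungDiagram).card = 0 := by
  simp [YoungDiagram.card, cells_bot]

lemma card_eq_zero {lam : YoungDiagram} : lam.card = 0 ↔ lam = ⊥ := by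
  constructor
  · intro h
    apply YoungDiagram.ext
    rw [Finset.card_eq_zero.mp h, cells_bot]
  · rintro rfl; exact card_bot

lemma card_sup_add_card_inf (lam ρ : YoungDiagram) :
    (lam ⊔ ρ).card + (lam ⊓ ρ).card = lam.card + ρ.card := by
  simp only [YoungDiagram.card, cells_sup, cells_inf]
  exact Finset.card_union_add_card_inter _ _

lemma pair (lam ρ : YoungDiagram) :
    (aboveF lam ∩ aboveF ρ).card = (belowF lam ∩ belowF ρ).card + (if lam = ρ then 1 else 0) := by
  rcases eq_or_ne lam ρ with rfl | hne
  · simp [card_aboveF_eq]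
  rw [if_neg hne, add_zero]
  rcases eq_or_ne lam.card ρ.card with hcard | hcard
  · -- equal cards
    set n := lam.card with hn
    have hsup : ∀ ν ∈ aboveF lam ∩ aboveF ρ, ν = lam ⊔ ρ := by
      intro ν hν
      rw [Finset.mem_inter, mem_aboveF, mem_aboveF] at hν
      obtain ⟨⟨h1, h2⟩, h3, h4⟩ := hν
      have hle : lam ⊔ ρ ≤ ν := sup_le h1 h3
      have hlt : n < (lam ⊔ ρ).card := by
        rcases eq_or_lt_of_le (card_mono (le_sup_left : lam ≤ lam ⊔ ρ)) with h | h
        · exfalso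
          have := eq_of_le_of_card_le (le_sup_left : lam ≤ lam ⊔ ρ) h.symm.le
          have hρ : ρ ≤ lam := this ▸ le_sup_right
          exact hne (eq_of_le_of_card_le hρ (by omega)).symm
        · exact h
      exact (eq_of_le_of_card_le hle (by omega)).symm
    have hinf : ∀ μ' ∈ belowF lam ∩ belowF ρ, μ' = lam ⊓ ρ := by
      intro μ' hμ
      rw [Finset.mem_inter, mem_belowF, mem_belowF] at hμ
      obtain ⟨⟨h1, h2⟩, h3, h4⟩ := hμ
      have hle : μ' ≤ lam ⊓ ρ := le_inf h1 h3
      have hlt : (lam ⊓ ρ).card < n := by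
        rcases eq_or_lt_of_le (card_mono (inf_le_left : lam ⊓ ρ ≤ lam)) with h | h
        · exfalso
          have := eq_of_le_of_card_le (inf_le_left : lam ⊓ ρ ≤ lam) h.ge
          have hρ : lam ≤ ρ := by
            conv_lhs => rw [← this]
            exact inf_le_right
          exact hne (eq_of_le_of_card_le hρ (by omega))
        · exact h
      exact eq_of_le_of_card_le hle (by omega)
    have hkey := card_sup_add_card_inf lam ρ
    have hiff : (lam ⊔ ρ).card = n + 1 ↔ (lam ⊓ ρ).card + 1 = n := by omega
    have habove : (aboveF lam ∩ aboveF ρ).card = if (lam ⊔ ρ).card = n + 1 then 1 else 0 := by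
      split_ifs with h
      · rw [Finset.card_eq_one]
        refine ⟨lam ⊔ ρ, Finset.ext fun ν => ?_⟩
        rw [Finset.mem_singleton]
        constructor
        · exact hsup ν
        · rintro rfl
          rw [Finset.mem_inter, mem_aboveF, mem_aboveF]
          exact ⟨⟨le_sup_left, h⟩, le_sup_right, by omega⟩
      · rw [Finset.card_eq_zero]
        rw [Finset.eq_empty_iff_forall_notMem]
        intro ν hν
        have h1 := hsup ν hν
        rw [Finset.mem_inter, mem_aboveF] at hν
        exact h (h1 ▸ hν.1.2)
    have hbelow : (belowF lam ∩ belowF ρ).card = if (lam ⊓ ρ).card + 1 = n then 1 else 0 := by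
      split_ifs with h
      · rw [Finset.card_eq_one]
        refine ⟨lam ⊓ ρ, Finset.ext fun μ' => ?_⟩
        rw [Finset.mem_singleton]
        constructor
        · exact hinf μ'
        · rintro rfl
          rw [Finset.mem_inter, mem_belowF, mem_belowF]
          exact ⟨⟨inf_le_left, by omega⟩, inf_le_right, by omega⟩
      · rw [Finset.card_eq_zero]
        rw [Finset.eq_empty_iff_forall_notMem]
        intro μ' hμ
        have h1 := hinf μ' hμ
        rw [Finset.mem_inter, mem_belowF] at hμ
        exact h (by rw [← h1]; omega)
    rw [habove, hbelow]
    simp only [hiff]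
  · -- different cards: both empty
    have h1 : aboveF lam ∩ aboveF ρ = ∅ := by
      rw [Finset.eq_empty_iff_forall_notMem]
      intro ν hν
      rw [Finset.mem_inter, mem_aboveF, mem_aboveF] at hν
      omega
    have h2 : belowF lam ∩ belowF ρ = ∅ := by
      rw [Finset.eq_empty_iff_forall_notMem]
      intro μ' hμ
      rw [Finset.mem_inter, mem_belowF, mem_belowF] at hμ
      omega
    rw [h1, h2]

lemma sum_over (s : Finset YoungDiagram) (F : YoungDiagram → Finset YoungDiagram)
    (U : Finset YoungDiagram) (hF : ∀ ν ∈ s, F ν ⊆ U) (g : YoungDiagram → ℕ) :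
    ∑ ν ∈ s, ∑ ρ ∈ F ν, g ρ = ∑ ρ ∈ U, (s.filter (fun ν => ρ ∈ F ν)).card * g ρ := by
  have h1 : ∀ ν ∈ s, ∑ ρ ∈ F ν, g ρ = ∑ ρ ∈ U, if ρ ∈ F ν then g ρ else 0 := by
    intro ν hν
    rw [Finset.sum_ite_mem, Finset.inter_eq_right.mpr (hF ν hν)]
  rw [Finset.sum_congr rfl h1, Finset.sum_comm]
  refine Finset.sum_congr rfl fun ρ _ => ?_
  rw [← Finset.sum_filter, Finset.sum_const, smul_eq_mul]

lemma filter_above (lam ρ : YoungDiagram) :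
    (aboveF lam).filter (fun ν => ρ ∈ belowF ν) = aboveF lam ∩ aboveF ρ := by
  ext ν
  simp only [Finset.mem_filter, Finset.mem_inter, mem_belowF, mem_aboveF]

lemma filter_below (lam ρ : YoungDiagram) :
    (belowF lam).filter (fun μ' => ρ ∈ aboveF μ') = belowF lam ∩ belowF ρ := by
  ext μ'
  simp only [Finset.mem_filter, Finset.mem_inter, mem_belowF, mem_aboveF]

set_option maxHeartbeats 1000000 in
lemma comm_lemma (lam : YoungDiagram) (g : YoungDiagram → ℕ) :
    ∑ ν ∈ aboveF lam, ∑ ρ ∈ belowF ν, g ρ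
      = (∑ μ' ∈ belowF lam, ∑ ρ ∈ aboveF μ', g ρ) + g lam := by
  classical
  set U : Finset YoungDiagram :=
    ((aboveF lam).biUnion belowF ∪ (belowF lam).biUnion aboveF) ∪ {lam} with hU
  have hlamU : lam ∈ U := by simp [hU]
  have hUb : ∀ ν ∈ aboveF lam, belowF ν ⊆ U := by
    intro ν hν x hx
    simp only [hU, Finset.mem_union, Finset.mem_biUnion]
    exact Or.inl (Or.inl ⟨ν, hν, hx⟩)
  have hUa : ∀ μ' ∈ belowF lam, aboveF μ' ⊆ U := by
    intro μ' hμ x hx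
    simp only [hU, Finset.mem_union, Finset.mem_biUnion]
    exact Or.inl (Or.inr ⟨μ', hμ, hx⟩)
  rw [sum_over _ _ U hUb, sum_over _ _ U hUa]
  have h1 : ∀ ρ ∈ U, ((aboveF lam).filter (fun ν => ρ ∈ belowF ν)).card * g ρ
      = ((belowF lam).filter (fun μ' => ρ ∈ aboveF μ')).card * g ρ
        + (if lam = ρ then g ρ else 0) := by
    intro ρ _
    rw [filter_above, filter_below, pair]
    rw [add_mul]
    congr 1
    split_ifs <;> simp
  rw [Finset.sum_congr rfl h1, Finset.sum_add_distrib, Finset.sum_ite_eq U lam g,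
    if_pos hlamU]

end UDAux
end P4
section P5
namespace UDAux
open YoungDiagram Finset

def nbrF (μ : YoungDiagram) : Finset YoungDiagram := belowF μ ∪ aboveF μ

lemma updownstep_iff {ρ μ : YoungDiagram} : UpDownStep ρ μ ↔ ρ ∈ nbrF μ := by
  rw [UpDownStep, nbrF, Finset.mem_union, mem_belowF, mem_aboveF]

lemma disj_below_above (ν : YoungDiagram) : Disjoint (belowF ν) (aboveF ν) := by
  rw [Finset.disjoint_left]
  intro ρ h1 h2
  rw [mem_belowF] at h1
  rw [mem_aboveF] at h2
  omega

lemma belowF_bot : belowF ⊥ = ∅ := by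
  rw [Finset.eq_empty_iff_forall_notMem]
  intro μ hμ
  rw [mem_belowF] at hμ
  have := hμ.2
  rw [card_bot] at this
  omega

/-- extension equivalence -/
def extEquiv (r : ℕ) (lam : YoungDiagram) :
    (UpDownTableaux (r + 1) lam) ≃ Σ ρ : (nbrF lam : Finset YoungDiagram),
      (UpDownTableaux r (ρ : YoungDiagram)) where
  toFun T :=
    ⟨⟨T.1 (Fin.castSucc (Fin.last r)), by
      refine updownstep_iff.mp ?_
      have h := T.2.2.2 (Fin.last r)
      rwa [Fin.succ_last, T.2.2.1] at h⟩,
     ⟨Fin.init T.1, by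
      refine ⟨?_, rfl, fun i => ?_⟩
      · show T.1 (Fin.castSucc 0) = ⊥
        rw [Fin.castSucc_zero]
        exact T.2.1
      · show UpDownStep (T.1 _) (T.1 _)
        have h := T.2.2.2 i.castSucc
        rwa [Fin.succ_castSucc] at h⟩⟩
  invFun p :=
    ⟨Fin.snoc p.2.1 lam, by
      refine ⟨?_, ?_, fun i => ?_⟩
      · have h := @Fin.snoc_castSucc (r + 1) (fun _ => YoungDiagram) lam p.2.1 0
        rw [Fin.castSucc_zero] at h
        exact h.trans p.2.2.1
      · exact Fin.snoc_last _ _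
      · refine Fin.lastCases ?_ (fun j => ?_) i
        · rw [Fin.snoc_castSucc, Fin.succ_last, Fin.snoc_last, p.2.2.2.1]
          exact updownstep_iff.mpr p.1.2
        · rw [Fin.snoc_castSucc, Fin.succ_castSucc, Fin.snoc_castSucc]
          exact p.2.2.2.2 j⟩
  left_inv T := by
    obtain ⟨T, hT⟩ := T
    apply Subtype.ext
    show Fin.snoc (Fin.init T) lam = T
    rw [← hT.2.1]
    exact Fin.snoc_init_self T
  right_inv p := by
    obtain ⟨⟨ρ, hρ⟩, S, hS⟩ := p
    have h1 : (Fin.snoc S lam : Fin (r + 2) → YoungDiagram) (Fin.castSucc (Fin.last r)) = ρ := by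
      rw [Fin.snoc_castSucc]
      exact hS.2.1
    subst h1
    exact Sigma.ext rfl (heq_of_eq (Subtype.ext (by simp)))

noncomputable def N (r : ℕ) (μ : YoungDiagram) : ℕ := (UpDownTableaux r μ).ncard

lemma finite_UDT (r : ℕ) (lam : YoungDiagram) : (UpDownTableaux r lam).Finite := by
  induction r generalizing lam with
  | zero =>
    apply Set.Finite.subset (Set.finite_singleton (fun _ => (⊥ : YoungDiagram)))
    intro T hT
    have hT0 : T = fun _ => (⊥ : YoungDiagram) := funext fun i => by
      have : i = 0 := Fin.ext (by have := i.isLt; omega)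
      rw [this]
      exact hT.1
    simp [hT0]
  | succ r ih =>
    rw [← Set.finite_coe_iff]
    have : ∀ ρ : (nbrF lam : Finset YoungDiagram),
        Finite (UpDownTableaux r (ρ : YoungDiagram)) :=
      fun ρ => Set.finite_coe_iff.mpr (ih _)
    exact Finite.of_equiv _ (extEquiv r lam).symm

lemma N_succ (r : ℕ) (lam : YoungDiagram) : N (r + 1) lam = ∑ ρ ∈ nbrF lam, N r ρ := by
  classical
  letI : ∀ μ : YoungDiagram, Fintype (UpDownTableaux r μ) := fun μ => (finite_UDT r μ).fintype
  have h1 : N (r + 1) lam = Nat.card (UpDownTableaux (r + 1) lam) :=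
    (Nat.card_coe_set_eq _).symm
  rw [h1, Nat.card_congr (extEquiv r lam), Nat.card_eq_fintype_card, Fintype.card_sigma,
    ← Finset.sum_coe_sort (nbrF lam) (fun ρ => N r ρ)]
  refine Finset.sum_congr rfl fun ρ _ => ?_
  rw [N, ← Nat.card_coe_set_eq, Nat.card_eq_fintype_card]

lemma N_zero (lam : YoungDiagram) : N 0 lam = if lam = ⊥ then 1 else 0 := by
  rcases eq_or_ne lam ⊥ with rfl | h
  · rw [if_pos rfl, N]
    have : UpDownTableaux 0 (⊥ : YoungDiagram) = {fun _ => ⊥} := by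
      ext T
      constructor
      · intro hT
        exact funext fun i => by
          have : i = 0 := Fin.ext (by have := i.isLt; omega)
          rw [this]; exact hT.1
      · rintro rfl
        exact ⟨rfl, rfl, fun i => i.elim0⟩
    rw [this, Set.ncard_singleton]
  · rw [if_neg h, N]
    have : UpDownTableaux 0 lam = ∅ := by
      rw [Set.eq_empty_iff_forall_notMem]
      intro T hT
      exact h (hT.2.1 ▸ hT.1 ▸ rfl)
    rw [this, Set.ncard_empty]

lemma N_one (ν : YoungDiagram) : N 1 ν = if ν.card = 1 then 1 else 0 := by
  rw [N_succ]
  have h1 : ∀ ρ ∈ nbrF ν, N 0 ρ = if ρ = ⊥ then 1 else 0 := fun ρ _ => N_zero ρ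
  rw [Finset.sum_congr rfl h1, Finset.sum_ite_eq' (nbrF ν) ⊥ (fun _ => 1)]
  have h2 : (⊥ : YoungDiagram) ∈ nbrF ν ↔ ν.card = 1 := by
    rw [nbrF, Finset.mem_union, mem_belowF, mem_aboveF]
    constructor
    · rintro (⟨-, h⟩ | ⟨-, h⟩)
      · rwa [card_bot] at h
      · rw [card_bot] at h; omega
    · intro h
      exact Or.inl ⟨bot_le, by rw [card_bot]; omega⟩
  simp only [h2]

lemma star : ∀ (r : ℕ) (lam : YoungDiagram),
    ∑ ν ∈ aboveF lam, N (r + 1) ν = (r + 1) * N r lam := by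
  intro r
  induction r with
  | zero =>
    intro lam
    have h1 : ∀ ν ∈ aboveF lam, N 1 ν = if lam = ⊥ then 1 else 0 := by
      intro ν hν
      rw [mem_aboveF] at hν
      rw [N_one]
      have hiff : ν.card = 1 ↔ lam = ⊥ := by
        rw [← card_eq_zero]; omega
      simp only [hiff]
    rw [Finset.sum_congr rfl h1, Finset.sum_const, smul_eq_mul]
    rcases eq_or_ne lam ⊥ with rfl | h
    · rw [if_pos rfl, mul_one, card_aboveF_eq, belowF_bot, N_zero, if_pos rfl]
      simp
    · rw [if_neg h, mul_zero, N_zero, if_neg h, mul_zero]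
  | succ r ih =>
    intro lam
    have hsplit : ∀ ν : YoungDiagram, N (r + 2) ν
        = ∑ ρ ∈ belowF ν, N (r + 1) ρ + ∑ ρ ∈ aboveF ν, N (r + 1) ρ := by
      intro ν
      rw [N_succ, nbrF, Finset.sum_union (disj_below_above ν)]
    have h3 : ∀ s : Finset YoungDiagram, ∑ ν ∈ s, ∑ ρ ∈ aboveF ν, N (r + 1) ρ
        = ∑ ν ∈ s, (r + 1) * N r ν := fun s => Finset.sum_congr rfl (fun ν _ => ih ν)
    calc ∑ ν ∈ aboveF lam, N (r + 2) ν
        = (∑ ν ∈ aboveF lam, ∑ ρ ∈ belowF ν, N (r + 1) ρ)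
          + ∑ ν ∈ aboveF lam, ∑ ρ ∈ aboveF ν, N (r + 1) ρ := by
          rw [Finset.sum_congr rfl (fun ν _ => hsplit ν), Finset.sum_add_distrib]
      _ = ((∑ μ' ∈ belowF lam, ∑ ρ ∈ aboveF μ', N (r + 1) ρ) + N (r + 1) lam)
          + ∑ ν ∈ aboveF lam, (r + 1) * N r ν := by
          rw [comm_lemma, h3 (aboveF lam)]
      _ = ((∑ μ' ∈ belowF lam, (r + 1) * N r μ') + N (r + 1) lam)
          + (r + 1) * ∑ ν ∈ aboveF lam, N r ν := by
          rw [h3 (belowF lam), Finset.mul_sum]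
      _ = (r + 1) * (∑ μ' ∈ belowF lam, N r μ' + ∑ ν ∈ aboveF lam, N r ν)
          + N (r + 1) lam := by
          rw [← Finset.mul_sum, mul_add]
          ring
      _ = (r + 1) * N (r + 1) lam + N (r + 1) lam := by
          rw [← Finset.sum_union (disj_below_above lam), ← nbrF, ← N_succ]
      _ = (r + 2) * N (r + 1) lam := by ring

lemma N_bot : ∀ r : ℕ, N r ⊥ = if Odd r then 0 else Nat.doubleFactorial (r - 1) := by
  intro r
  induction r using Nat.twoStepInduction with
  | zero =>
    rw [N_zero, if_pos rfl, if_neg (by simp [Nat.odd_iff])]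
    rfl
  | one =>
    rw [N_one, if_neg (by rw [card_bot]; omega), if_pos (by simp [Nat.odd_iff])]
  | more n ih _ =>
    have h1 : N (n + 2) ⊥ = (n + 1) * N n ⊥ := by
      rw [N_succ, nbrF, belowF_bot, Finset.empty_union, star]
    rw [h1, ih]
    have hodd : Odd (n + 2) ↔ Odd n := by
      rw [Nat.odd_iff, Nat.odd_iff]; omega
    simp only [hodd]
    split_ifs with h
    · rw [mul_zero]
    · rcases Nat.eq_zero_or_pos n with rfl | hn
      · rfl
      · have h2 : n + 2 - 1 = (n - 1) + 2 := by omega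
        rw [h2, Nat.doubleFactorial_add_two]
        have h4 : n - 1 + 2 = n + 1 := by omega
        rw [h4]

end UDAux
end P5

theorem upDownTableaux_empty_shape_count (r : ℕ) :
    (UpDownTableaux r ⊥).ncard = if Odd r then 0 else Nat.doubleFactorial (r - 1) := by
  exact UDAux.N_bot r
end
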